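/- arXiv:1912.01753 — 6 statements merged into one kernel-verified Lean document; each statement's English description precedes it below -/
import Mathlib

section
/- If f ∈ L²(𝕋; ℂ) satisfies ∫_{𝕋×𝕋} R(k,k')·|f(k) − f(k')|² dk dk' = 0, then f is almost everywhere equal to a constant. -/
noncomputable section
open Real MeasureTheory

/-- The function `r(k,k')` from the stochastic perturbation. -/
def rfun (k k' : ℝ) : ℝ :=
  2 * sin (π * k) ^ 2 * sin (2 * π * (k - k')) + sin (2 * π * k) * sin (π * (k - k')) ^ 2

/-- The scattering kernel `R(k,k') = (1/2)[r(k,k+k')² + r(k,k-k')²]`. -/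
def Rker (k k' : ℝ) : ℝ := (1 / 2) * (rfun k (k + k') ^ 2 + rfun k (k - k') ^ 2)

/-- The torus `𝕋`, identified with `[-1/2, 1/2)`. -/
def T : Set ℝ := Set.Ico (-(1 : ℝ) / 2) (1 / 2)

/-- Lebesgue measure on the torus. -/
def μT : Measure ℝ := volume.restrict T

lemma analyticAt_rsin (x : ℝ) : AnalyticAt ℝ Real.sin x := by
  have h : Real.sin = fun y : ℝ => Complex.reCLM (Complex.sin (Complex.ofRealCLM y)) := by
    ext y; simp [Complex.sin_ofReal_re]
  rw [h]
  exact (Complex.reCLM.analyticAt _).comp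
    (((Complex.differentiable_sin.analyticAt _).restrictScalars).comp
      (Complex.ofRealCLM.analyticAt _))

lemma analyticAt_sin_affine (a b x : ℝ) : AnalyticAt ℝ (fun y : ℝ => Real.sin (a + b * y)) x :=
  (analyticAt_rsin _).comp (analyticAt_const.add (analyticAt_const.mul analyticAt_id))

lemma analyticAt_Rker (k x : ℝ) : AnalyticAt ℝ (fun k' => Rker k k') x := by
  have h1 : ∀ (c : ℝ), AnalyticAt ℝ (fun k' : ℝ => rfun k (k + c * k')) x := by
    intro c
    have e : (fun k' : ℝ => rfun k (k + c * k')) =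
        fun k' : ℝ => 2 * sin (π * k) ^ 2 * sin (2 * π * (-c) * k') +
          sin (2 * π * k) * sin (π * (-c) * k') ^ 2 := by
      ext y; simp only [rfun]; ring_nf
    rw [e]
    exact (analyticAt_const.mul
        (((analyticAt_rsin _).comp (analyticAt_const.mul analyticAt_id)))).add
      (analyticAt_const.mul
        (((analyticAt_rsin _).comp (analyticAt_const.mul analyticAt_id)).pow 2))
  have h2 := ((h1 1).pow 2).add ((h1 (-1)).pow 2)
  have h3 : AnalyticAt ℝ (fun k' : ℝ =>
      (1/2 : ℝ) * (rfun k (k + 1 * k') ^ 2 + rfun k (k + (-1) * k') ^ 2)) x :=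
    analyticAt_const.mul h2
  refine h3.congr ?_
  filter_upwards with y
  simp only [Rker, one_mul, neg_one_mul]
  ring_nf

lemma abs_rfun_le (k x : ℝ) : |rfun k x| ≤ 3 := by
  have h1 := abs_sin_le_one (π * k)
  have h2 := abs_sin_le_one (2 * π * (k - x))
  have h3 := abs_sin_le_one (2 * π * k)
  have h4 := abs_sin_le_one (π * (k - x))
  have e1 : |sin (π * k)| ^ 2 ≤ 1 := by nlinarith [abs_nonneg (sin (π * k))]
  have e4 : |sin (π * (k - x))| ^ 2 ≤ 1 := by nlinarith [abs_nonneg (sin (π * (k - x)))]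
  calc |rfun k x| ≤ |2 * sin (π * k) ^ 2 * sin (2 * π * (k - x))| +
        |sin (2 * π * k) * sin (π * (k - x)) ^ 2| := abs_add_le _ _
    _ ≤ 3 := by
        rw [abs_mul, abs_mul, abs_mul, abs_pow, abs_pow]
        have n2 := abs_nonneg (sin (2 * π * (k - x)))
        have n3 := abs_nonneg (sin (2 * π * k))
        have n1 := abs_nonneg (sin (π * k))
        have n4 := abs_nonneg (sin (π * (k - x)))
        have q1 : |sin (π * k)| ^ 2 * |sin (2 * π * (k - x))| ≤ 1 := by nlinarith
        have q2 : |sin (2 * π * k)| * |sin (π * (k - x))| ^ 2 ≤ 1 := by nlinarith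
        have habs2 : |(2:ℝ)| = 2 := by norm_num
        rw [habs2]
        linarith

lemma Rker_nonneg (k k' : ℝ) : 0 ≤ Rker k k' := by
  unfold Rker; positivity

lemma Rker_le (k k' : ℝ) : Rker k k' ≤ 9 := by
  have h1 := abs_rfun_le k (k + k')
  have h2 := abs_rfun_le k (k - k')
  have e1 : rfun k (k + k') ^ 2 ≤ 9 := by
    have := sq_abs (rfun k (k + k')); nlinarith [abs_nonneg (rfun k (k + k'))]
  have e2 : rfun k (k - k') ^ 2 ≤ 9 := by
    have := sq_abs (rfun k (k - k')); nlinarith [abs_nonneg (rfun k (k - k'))]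
  unfold Rker; linarith

lemma continuous_Rker : Continuous (fun p : ℝ × ℝ => Rker p.1 p.2) := by
  unfold Rker rfun; fun_prop

/-- If `sin (π k) ≠ 0`, then `k' ↦ Rker k k'` is not identically zero. -/
lemma exists_Rker_ne_zero {k : ℝ} (hk : Real.sin (π * k) ≠ 0) :
    ∃ y : ℝ, Rker k y ≠ 0 := by
  -- rfun k (k - y) = 2 sin²(πk) sin(2πy) + sin(2πk) sin²(πy)
  have key : ∀ y : ℝ, rfun k (k - y) =
      2 * sin (π * k) ^ 2 * sin (2 * π * y) + sin (2 * π * k) * sin (π * y) ^ 2 := by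
    intro y; simp only [rfun]; ring_nf
  by_cases h : rfun k (k - (1/4 : ℝ)) = 0
  · refine ⟨-(1/4 : ℝ), ?_⟩
    have hv : rfun k (k - (-(1/4) : ℝ)) ≠ 0 := by
      rw [key] at h ⊢
      have s1 : sin (2 * π * (1/4 : ℝ)) = 1 := by
        norm_num [show 2 * π * (1/4 : ℝ) = π/2 by ring]
      have s2 : sin (2 * π * (-(1/4) : ℝ)) = -1 := by
        rw [show 2 * π * (-(1/4) : ℝ) = -(π/2) by ring, Real.sin_neg]
        norm_num
      have s3 : sin (π * (-(1/4) : ℝ)) ^ 2 = sin (π * (1/4 : ℝ)) ^ 2 := by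
        rw [show π * (-(1/4) : ℝ) = -(π * (1/4:ℝ)) by ring, Real.sin_neg]; ring
      rw [s2, s3]
      rw [s1] at h
      intro h2
      have hsq : (0:ℝ) < sin (π * k) ^ 2 :=
        lt_of_le_of_ne (sq_nonneg _) (Ne.symm (pow_ne_zero _ hk))
      linarith
    intro hR
    have h0 : (0:ℝ) < rfun k (k - (-(1/4):ℝ)) ^ 2 := by positivity
    have : Rker k (-(1/4 : ℝ)) > 0 := by
      unfold Rker
      nlinarith [sq_nonneg (rfun k (k + -(1/4:ℝ)))]
    exact absurd hR this.ne'
  · refine ⟨(1/4 : ℝ), ?_⟩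
    intro hR
    have h0 : (0:ℝ) < rfun k (k - (1/4:ℝ)) ^ 2 := by positivity
    have : Rker k ((1/4 : ℝ)) > 0 := by
      unfold Rker
      nlinarith [sq_nonneg (rfun k (k + (1/4:ℝ)))]
    exact absurd hR this.ne'

/-- For `sin(πk) ≠ 0`, the zero set of `k' ↦ Rker k k'` is countable. -/
lemma slice_countable {k : ℝ} (hk : Real.sin (π * k) ≠ 0) :
    Set.Countable {k' : ℝ | Rker k k' = 0} := by
  obtain ⟨y₀, hy₀⟩ := exists_Rker_ne_zero hk
  have hg : AnalyticOnNhd ℝ (fun k' => Rker k k') Set.univ := fun x _ => analyticAt_Rker k x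
  rcases hg.eqOn_zero_or_eventually_ne_zero_of_preconnected isPreconnected_univ with h | h
  · exact absurd (h (Set.mem_univ y₀)) hy₀
  · have hmem : {x : ℝ | Rker k x ≠ 0} ∈ Filter.codiscrete ℝ := h
    rw [mem_codiscrete'] at hmem
    have hd : DiscreteTopology ↥({x : ℝ | Rker k x ≠ 0}ᶜ) := isDiscrete_iff_discreteTopology.mp hmem.2
    have hc : Countable ↥({x : ℝ | Rker k x ≠ 0}ᶜ) := by
      have : TopologicalSpace.SeparableSpace ↥({x : ℝ | Rker k x ≠ 0}ᶜ) := inferInstance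
      exact (TopologicalSpace.separableSpace_iff_countable).mp this
    have : ({x : ℝ | Rker k x ≠ 0}ᶜ : Set ℝ) = {k' : ℝ | Rker k k' = 0} := by
      ext x; simp
    rw [← this]
    exact Set.countable_coe_iff.mp hc

lemma Z_null : (volume.prod volume) {p : ℝ × ℝ | Rker p.1 p.2 = 0} = 0 := by
  have hZm : MeasurableSet {p : ℝ × ℝ | Rker p.1 p.2 = 0} :=
    (continuous_Rker.measurable) (measurableSet_singleton 0)
  rw [Measure.prod_apply hZm]
  have hN : Set.Countable {k : ℝ | Real.sin (π * k) = 0} := by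
    have hsub : {k : ℝ | Real.sin (π * k) = 0} ⊆ Set.range (fun n : ℤ => (n : ℝ)) := by
      intro k hk
      rw [Set.mem_setOf_eq, Real.sin_eq_zero_iff] at hk
      obtain ⟨n, hn⟩ := hk
      refine ⟨n, ?_⟩
      have hπ : π * (n:ℝ) = π * k := by linarith [hn]
      exact mul_left_cancel₀ Real.pi_ne_zero hπ
    exact (Set.countable_range _).mono hsub
  have hae : ∀ᵐ k : ℝ ∂volume, volume (Prod.mk k ⁻¹' {p : ℝ × ℝ | Rker p.1 p.2 = 0}) = 0 := by
    have hNnull : volume {k : ℝ | Real.sin (π * k) = 0} = 0 := hN.measure_zero _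
    filter_upwards [measure_eq_zero_iff_ae_notMem.mp hNnull] with k hk
    have : Prod.mk k ⁻¹' {p : ℝ × ℝ | Rker p.1 p.2 = 0} = {k' : ℝ | Rker k k' = 0} := rfl
    rw [this]
    exact (slice_countable hk).measure_zero _
  rw [lintegral_congr_ae hae]
  simp

theorem stmt4 (f : ℝ → ℂ) (hf : MemLp f 2 μT)
    (h0 : (∫ k, ∫ k', Rker k k' * ‖f k - f k'‖ ^ 2 ∂μT ∂μT) = 0) :
    ∃ c : ℂ, f =ᵐ[μT] fun _ => c := by
  haveI : IsFiniteMeasure μT := by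
    constructor
    rw [μT, Measure.restrict_apply_univ, T]
    simp [Real.volume_Ico]
  set F : ℝ × ℝ → ℝ := fun p => Rker p.1 p.2 * ‖f p.1 - f p.2‖ ^ 2 with hF
  -- integrability
  have hfm : AEStronglyMeasurable f μT := hf.1
  have hsubm : AEStronglyMeasurable (fun p : ℝ × ℝ => f p.1 - f p.2) (μT.prod μT) :=
    hfm.comp_fst.sub hfm.comp_snd
  have hFm : AEStronglyMeasurable F (μT.prod μT) := by
    exact (continuous_Rker.aestronglyMeasurable).mul (hsubm.norm.pow 2)
  have hnsq : Integrable (fun k : ℝ => ‖f k‖ ^ 2) μT := by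
    have := hf.integrable_norm_rpow two_ne_zero ENNReal.ofNat_ne_top
    refine this.congr ?_
    filter_upwards with x
    rw [ENNReal.toReal_ofNat, Real.rpow_two]
  have hmap1 : (μT.prod μT).map Prod.fst = (μT Set.univ) • μT := Measure.map_fst_prod
  have hmap2 : (μT.prod μT).map Prod.snd = (μT Set.univ) • μT := Measure.map_snd_prod
  have hint1 : Integrable (fun p : ℝ × ℝ => ‖f p.1‖ ^ 2) (μT.prod μT) := by
    have h := (hnsq.smul_measure (c := μT Set.univ) (measure_ne_top _ _))
    rw [← hmap1] at h
    exact h.comp_aemeasurable measurable_fst.aemeasurable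
  have hint2 : Integrable (fun p : ℝ × ℝ => ‖f p.2‖ ^ 2) (μT.prod μT) := by
    have h := (hnsq.smul_measure (c := μT Set.univ) (measure_ne_top _ _))
    rw [← hmap2] at h
    exact h.comp_aemeasurable measurable_snd.aemeasurable
  have hFint : Integrable F (μT.prod μT) := by
    refine Integrable.mono ((hint1.const_mul 18).add (hint2.const_mul 18)) hFm ?_
    filter_upwards with p
    have h1 : 0 ≤ F p := mul_nonneg (Rker_nonneg _ _) (by positivity)
    rw [Real.norm_of_nonneg h1]
    have hb : ‖f p.1 - f p.2‖ ^ 2 ≤ 2 * ‖f p.1‖ ^ 2 + 2 * ‖f p.2‖ ^ 2 := by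
      have h := norm_sub_le (f p.1) (f p.2)
      nlinarith [norm_nonneg (f p.1), norm_nonneg (f p.2), norm_nonneg (f p.1 - f p.2),
        sq_nonneg (‖f p.1‖ - ‖f p.2‖), mul_self_le_mul_self (norm_nonneg (f p.1 - f p.2)) h]
    have hR := Rker_le p.1 p.2
    have hRnn := Rker_nonneg p.1 p.2
    have : F p ≤ 9 * (2 * ‖f p.1‖ ^ 2 + 2 * ‖f p.2‖ ^ 2) := by
      calc F p ≤ 9 * ‖f p.1 - f p.2‖ ^ 2 := by
              exact mul_le_mul_of_nonneg_right hR (by positivity)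
        _ ≤ 9 * (2 * ‖f p.1‖ ^ 2 + 2 * ‖f p.2‖ ^ 2) := by linarith
    calc F p ≤ 9 * (2 * ‖f p.1‖ ^ 2 + 2 * ‖f p.2‖ ^ 2) := this
      _ ≤ ‖18 * ‖f p.1‖ ^ 2 + 18 * ‖f p.2‖ ^ 2‖ := by
          rw [Real.norm_of_nonneg (by positivity)]; ring_nf; linarith [sq_nonneg ‖f p.1‖]
  -- integral over product is zero
  have hFint' : Integrable (Function.uncurry fun k k' => Rker k k' * ‖f k - f k'‖ ^ 2)
      (μT.prod μT) := hFint
  have hprod0 : ∫ p, F p ∂(μT.prod μT) = 0 :=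
    (MeasureTheory.integral_integral hFint').symm.trans h0
  have hFae : F =ᵐ[μT.prod μT] 0 := by
    refine (integral_eq_zero_iff_of_nonneg ?_ hFint).mp hprod0
    intro p
    exact mul_nonneg (Rker_nonneg _ _) (by positivity)
  -- Rker ≠ 0 a.e. on the product
  have hZ : (μT.prod μT) {p : ℝ × ℝ | Rker p.1 p.2 = 0} = 0 := by
    have h1 : μT.prod μT = (volume.prod volume).restrict (T ×ˢ T) := by
      rw [μT, Measure.prod_restrict]
    rw [h1]
    exact le_antisymm ((Measure.restrict_apply_le _ _).trans Z_null.le) zero_le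
  have hRne : ∀ᵐ p ∂(μT.prod μT), Rker p.1 p.2 ≠ 0 := by
    rw [ae_iff]
    convert hZ using 2
    ext p; simp
  have hfeq : ∀ᵐ p ∂(μT.prod μT), f p.1 = f p.2 := by
    filter_upwards [hFae, hRne] with p h1 h2
    have : Rker p.1 p.2 * ‖f p.1 - f p.2‖ ^ 2 = 0 := h1
    rcases mul_eq_zero.mp this with h | h
    · exact absurd h h2
    · have : ‖f p.1 - f p.2‖ = 0 := by nlinarith [norm_nonneg (f p.1 - f p.2)]
      exact sub_eq_zero.mp (norm_eq_zero.mp this)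
  have hμTne : μT ≠ 0 := by
    intro h
    have : μT Set.univ = 0 := by rw [h]; simp
    rw [μT, Measure.restrict_apply_univ, T, Real.volume_Ico] at this
    norm_num at this
  haveI : (ae μT).NeBot := ae_neBot.mpr hμTne
  have hiter : ∀ᵐ k ∂μT, ∀ᵐ k' ∂μT, f k = f k' := Measure.ae_ae_of_ae_prod hfeq
  obtain ⟨k₀, hk₀⟩ := hiter.exists
  exact ⟨f k₀, hk₀.mono fun k' h => h.symm⟩
end
end

section
/- Let 2 < θ < 3. There exists a constant K > 0 such that for all k ∈ (0, 1/2] one has |α̂(k) − C(θ)·k^{θ−1}| ≤ K·k², where C(θ) := 4π^{θ−1}·∫₀^∞ sin²(y)/y^θ dy. -/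
noncomputable section
open Real MeasureTheory Set

namespace Stmt6Aux

/-- The basic function `f t = sin(pt)^2 / t^θ`. -/
def F (θ p t : ℝ) : ℝ := sin (p * t) ^ 2 / t ^ θ

lemma F_nonneg (θ p t : ℝ) (ht : 0 < t) : 0 ≤ F θ p t := by
  have : (0:ℝ) ≤ t ^ θ := (Real.rpow_pos_of_pos ht θ).le
  exact div_nonneg (sq_nonneg _) this

lemma contOn (θ p : ℝ) : ContinuousOn (fun t : ℝ => F θ p t) (Ioi 0) := by
  apply ContinuousOn.div
  · exact (Continuous.continuousOn (by continuity))
  · intro t ht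
    exact (Real.continuousAt_rpow_const t θ (Or.inl (ne_of_gt ht))).continuousWithinAt
  · intro t ht
    exact (Real.rpow_pos_of_pos ht θ).ne'

lemma F_le_one_div (θ p : ℝ) {t : ℝ} (ht : 0 < t) : F θ p t ≤ t ^ (-θ) := by
  rw [Real.rpow_neg ht.le]
  rw [F, div_eq_mul_inv]
  have h1 : sin (p*t)^2 ≤ 1 := sin_sq_le_one _
  have h2 : (0:ℝ) < (t ^ θ)⁻¹ := inv_pos.mpr (Real.rpow_pos_of_pos ht θ)
  nlinarith

lemma F_le_sq (θ p : ℝ) {t : ℝ} (ht : 0 < t) (hp : 0 ≤ p) : F θ p t ≤ p^2 * t ^ (2-θ) := by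
  have hsin : sin (p*t)^2 ≤ (p*t)^2 := Real.sin_sq_le_sq
  have h2 : (0:ℝ) < t ^ θ := Real.rpow_pos_of_pos ht θ
  have : F θ p t ≤ (p*t)^2 / t ^ θ := by
    unfold F; gcongr
  refine this.trans_eq ?_
  rw [mul_pow, Real.rpow_sub ht, ← Real.rpow_natCast t 2]
  norm_num
  field_simp

lemma integrable (θ : ℝ) (hθ1 : 1 < θ) (hθ2 : θ < 3) {p : ℝ} (hp : 0 ≤ p) :
    IntegrableOn (fun t : ℝ => F θ p t) (Ioi 0) := by
  have h1 : IntegrableOn (fun t : ℝ => F θ p t) (Ioc 0 1) := by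
    have hint : IntegrableOn (fun t : ℝ => p^2 * t ^ (2-θ)) (Ioc 0 1) := by
      have := (intervalIntegrable_iff_integrableOn_Ioc_of_le
        (by norm_num : (0:ℝ) ≤ 1)).1 (intervalIntegral.intervalIntegrable_rpow' (a := 0) (b := 1)
        (r := 2-θ) (by linarith))
      exact this.const_mul (p^2)
    refine Integrable.mono' hint ?_ ?_
    · exact ((contOn θ p).mono (Ioc_subset_Ioi_self)).aestronglyMeasurable measurableSet_Ioc
    · filter_upwards [ae_restrict_mem measurableSet_Ioc] with t ht
      rw [Real.norm_eq_abs, abs_of_nonneg (F_nonneg θ p t ht.1)]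
      exact F_le_sq θ p ht.1 hp
  have h2 : IntegrableOn (fun t : ℝ => F θ p t) (Ioi 1) := by
    have hint : IntegrableOn (fun t : ℝ => t ^ (-θ)) (Ioi 1) :=
      integrableOn_Ioi_rpow_of_lt (by linarith) one_pos
    refine Integrable.mono' hint ?_ ?_
    · exact ((contOn θ p).mono (show Ioi (1:ℝ) ⊆ Ioi 0 from fun t ht => mem_Ioi.2 (lt_trans one_pos (mem_Ioi.1 ht)))).aestronglyMeasurable
        measurableSet_Ioi
    · filter_upwards [ae_restrict_mem measurableSet_Ioi] with t ht
      rw [Real.norm_eq_abs, abs_of_nonneg (F_nonneg θ p t (lt_trans one_pos ht))]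
      exact F_le_one_div θ p (lt_trans one_pos ht)
  have : IntegrableOn (fun t : ℝ => F θ p t) (Ioc 0 1 ∪ Ioi 1) := h1.union h2
  rwa [Ioc_union_Ioi_eq_Ioi (by norm_num : (0:ℝ) ≤ 1)] at this

lemma hasDeriv (θ p : ℝ) {t : ℝ} (ht : 0 < t) :
    HasDerivAt (fun s : ℝ => F θ p s)
      ((2 * sin (p*t) * (cos (p*t) * p) * t ^ θ - sin (p*t)^2 * (θ * t ^ (θ-1))) / (t ^ θ)^2)
      t := by
  have hu : HasDerivAt (fun s : ℝ => sin (p*s)^2) (2 * sin (p*t) * (cos (p*t) * p)) t := by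
    have h0 : HasDerivAt (fun s : ℝ => p * s) p t := by
      simpa using (hasDerivAt_id t).const_mul p
    have h1 : HasDerivAt (fun s : ℝ => sin (p*s)) (cos (p*t) * p) t :=
      (Real.hasDerivAt_sin (p*t)).comp t h0
    simpa [mul_comm, mul_assoc, mul_left_comm] using h1.fun_pow 2
  have hv : HasDerivAt (fun s : ℝ => s ^ θ) (θ * t ^ (θ-1)) t :=
    Real.hasDerivAt_rpow_const (Or.inl ht.ne')
  exact hu.div hv (Real.rpow_pos_of_pos ht θ).ne'

lemma deriv_bound (θ p : ℝ) (hθ : 0 ≤ θ) {t : ℝ} (ht : 0 < t) (hp : 0 ≤ p) :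
    |(2 * sin (p*t) * (cos (p*t) * p) * t ^ θ - sin (p*t)^2 * (θ * t ^ (θ-1))) / (t ^ θ)^2|
      ≤ (2+θ) * p^2 * t ^ (1-θ) := by
  have htθ : (0:ℝ) < t ^ θ := Real.rpow_pos_of_pos ht θ
  have hpt : 0 ≤ p * t := mul_nonneg hp ht.le
  have hs : |sin (p*t)| ≤ p * t := by
    simpa [abs_of_nonneg hpt] using Real.abs_sin_le_abs (x := p*t)
  have hc : |cos (p*t)| ≤ 1 := Real.abs_cos_le_one _
  have hnum : |2 * sin (p*t) * (cos (p*t) * p) * t ^ θ - sin (p*t)^2 * (θ * t ^ (θ-1))|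
      ≤ 2 * p^2 * (t * t ^ θ) + θ * p^2 * (t^2 * t ^ (θ-1)) := by
    have h1 : |2 * sin (p*t) * (cos (p*t) * p) * t ^ θ| ≤ 2 * p^2 * (t * t ^ θ) := by
      rw [abs_mul, abs_mul, abs_mul, abs_of_nonneg (Real.rpow_pos_of_pos ht θ).le]
      have : |cos (p*t) * p| ≤ p := by
        rw [abs_mul, abs_of_nonneg hp]
        nlinarith
      calc |2| * |sin (p*t)| * |cos (p*t) * p| * t ^ θ
          ≤ 2 * (p*t) * p * t ^ θ := by
            apply mul_le_mul_of_nonneg_right _ (Real.rpow_pos_of_pos ht θ).le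
            have h2 : |(2:ℝ)| = 2 := by norm_num
            rw [h2]
            have := abs_nonneg (sin (p*t))
            nlinarith [abs_nonneg (cos (p*t) * p)]
        _ = 2 * p^2 * (t * t ^ θ) := by ring
    have h2 : |sin (p*t)^2 * (θ * t ^ (θ-1))| ≤ θ * p^2 * (t^2 * t ^ (θ-1)) := by
      rw [abs_mul]
      have hsq : |sin (p*t)^2| ≤ (p*t)^2 := by
        rw [abs_of_nonneg (sq_nonneg _)]; exact Real.sin_sq_le_sq
      have hθt : |θ * t ^ (θ-1)| = θ * t ^ (θ-1) := by
        rw [abs_of_nonneg (mul_nonneg hθ (Real.rpow_pos_of_pos ht _).le)]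
      rw [hθt]
      calc |sin (p*t)^2| * (θ * t ^ (θ-1)) ≤ (p*t)^2 * (θ * t ^ (θ-1)) := by
            apply mul_le_mul_of_nonneg_right hsq
              (mul_nonneg hθ (Real.rpow_pos_of_pos ht _).le)
        _ = θ * p^2 * (t^2 * t ^ (θ-1)) := by ring
    calc |2 * sin (p*t) * (cos (p*t) * p) * t ^ θ - sin (p*t)^2 * (θ * t ^ (θ-1))|
        ≤ |2 * sin (p*t) * (cos (p*t) * p) * t ^ θ| + |sin (p*t)^2 * (θ * t ^ (θ-1))| :=
          abs_sub _ _
      _ ≤ 2 * p^2 * (t * t ^ θ) + θ * p^2 * (t^2 * t ^ (θ-1)) := add_le_add h1 h2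
  have hkey : t * t ^ θ = t ^ (θ+1) := by
    rw [Real.rpow_add ht, Real.rpow_one]; ring
  have hkey2 : t^2 * t ^ (θ-1) = t ^ (θ+1) := by
    rw [← Real.rpow_natCast t 2, ← Real.rpow_add ht]
    norm_num
    ring_nf
  rw [abs_div, abs_of_nonneg (sq_nonneg (t^θ))]
  rw [div_le_iff₀ (by positivity)]
  calc |2 * sin (p*t) * (cos (p*t) * p) * t ^ θ - sin (p*t)^2 * (θ * t ^ (θ-1))|
      ≤ 2 * p^2 * (t * t ^ θ) + θ * p^2 * (t^2 * t ^ (θ-1)) := hnum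
    _ = (2+θ) * p^2 * t ^ (θ+1) := by rw [hkey, hkey2]; ring
    _ = (2+θ) * p^2 * t ^ (1-θ) * (t ^ θ)^2 := by
        have h3 : (t ^ θ)^(2:ℕ) = t ^ (θ * ((2:ℕ):ℝ)) := by
          rw [← Real.rpow_natCast (t ^ θ) 2, ← Real.rpow_mul ht.le]
        have h4 : t ^ (1-θ) * t ^ (θ * ((2:ℕ):ℝ)) = t ^ (θ+1) := by
          rw [← Real.rpow_add ht]
          norm_num
          ring_nf
        rw [h3, ← h4]
        ring

lemma iUnion_Ioc_eq : (⋃ n : ℕ, Ioc ((n:ℝ)) ((n:ℝ)+1)) = Ioi 0 := by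
  ext x
  simp only [mem_iUnion, mem_Ioc, mem_Ioi]
  constructor
  · rintro ⟨n, hn1, hn2⟩
    exact lt_of_le_of_lt (Nat.cast_nonneg n) hn1
  · intro hx
    have h1 : 1 ≤ ⌈x⌉₊ := Nat.one_le_ceil_iff.mpr hx
    have h2 : (⌈x⌉₊ : ℝ) < x + 1 := Nat.ceil_lt_add_one hx.le
    have h3 := Nat.le_ceil x
    refine ⟨⌈x⌉₊ - 1, ?_, ?_⟩
    · rw [Nat.cast_sub h1]; push_cast; linarith
    · rw [Nat.cast_sub h1]; push_cast; linarith

lemma pairwise_disj : Pairwise (Function.onFun Disjoint (fun n : ℕ => Ioc ((n:ℝ)) ((n:ℝ)+1))) := by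
  intro m n hmn
  simp only [Function.onFun]
  rw [Set.Ioc_disjoint_Ioc]
  rcases Ne.lt_or_gt hmn with h | h
  · exact le_trans (min_le_left _ _)
      (le_trans (by exact_mod_cast Nat.succ_le_of_lt h) (le_max_right _ _))
  · exact le_trans (min_le_right _ _)
      (le_trans (by exact_mod_cast Nat.succ_le_of_lt h) (le_max_left _ _))

lemma summable_rpow_shift {c : ℝ} (hc : c < -1) :
    Summable (fun n : ℕ => ((n:ℝ)+1) ^ c) := by
  have h := Real.summable_nat_rpow (p := c) |>.mpr hc
  have h2 := (summable_nat_add_iff 1).mpr h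
  refine h2.congr fun n => ?_
  push_cast
  ring_nf

lemma keybound (θ : ℝ) (hθ1 : 2 < θ) (hθ2 : θ < 3) {p : ℝ} (hp : 0 ≤ p) (n : ℕ) :
    |F θ p ((n:ℝ)+1) - ∫ t in Ioc ((n:ℝ)+1) (((n:ℝ)+1)+1), F θ p t|
      ≤ (2+θ) * p^2 * ((n:ℝ)+1) ^ (1-θ) := by
  set a : ℝ := (n:ℝ)+1 with ha
  have ha0 : (0:ℝ) < a := by positivity
  have ha1 : a ∈ Icc a (a+1) := ⟨le_refl a, by linarith⟩
  set C : ℝ := (2+θ) * p^2 * a ^ (1-θ) with hCdef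
  have hC0 : 0 ≤ C := by
    have := (Real.rpow_pos_of_pos ha0 (1-θ)).le
    positivity
  have hMVT : ∀ t ∈ Icc a (a+1), |F θ p a - F θ p t| ≤ C := by
    intro t ht
    have hder : ∀ x ∈ Icc a (a+1), HasDerivWithinAt (fun s : ℝ => F θ p s)
        ((2 * sin (p*x) * (cos (p*x) * p) * x ^ θ - sin (p*x)^2 * (θ * x ^ (θ-1))) / (x ^ θ)^2)
        (Icc a (a+1)) x := by
      intro x hx
      exact (hasDeriv θ p (lt_of_lt_of_le ha0 hx.1)).hasDerivWithinAt
    have hbd : ∀ x ∈ Icc a (a+1),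
        ‖(2 * sin (p*x) * (cos (p*x) * p) * x ^ θ - sin (p*x)^2 * (θ * x ^ (θ-1))) / (x ^ θ)^2‖
          ≤ C := by
      intro x hx
      have hx0 : 0 < x := lt_of_lt_of_le ha0 hx.1
      refine (deriv_bound θ p (by linarith) hx0 hp).trans ?_
      rw [hCdef]
      have hle : x ^ (1-θ) ≤ a ^ (1-θ) :=
        Real.rpow_le_rpow_of_nonpos ha0 hx.1 (by linarith)
      have h2θp : 0 ≤ (2+θ) * p^2 := by nlinarith [sq_nonneg p]
      exact mul_le_mul_of_nonneg_left hle h2θp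
    have := Convex.norm_image_sub_le_of_norm_hasDerivWithin_le hder hbd
      (convex_Icc a (a+1)) ht ha1
    rw [Real.norm_eq_abs, Real.norm_eq_abs] at this
    refine this.trans ?_
    have : |a - t| ≤ 1 := by
      rw [abs_le]; constructor <;> [linarith [ht.2]; linarith [ht.1]]
    nlinarith
  have hvol : volume (Ioc a (a+1)) < ⊤ := by
    rw [Real.volume_Ioc]; exact ENNReal.ofReal_lt_top
  have hvol1 : (volume (Ioc a (a+1))).toReal = 1 := by
    rw [Real.volume_Ioc]
    norm_num
  have hInt : IntegrableOn (fun t => F θ p t) (Ioc a (a+1)) := by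
    refine (integrable θ (by linarith) hθ2 hp).mono_set ?_
    intro t ht
    exact lt_trans ha0 ht.1
  have hconst : F θ p a = ∫ t in Ioc a (a+1), F θ p a := by
    rw [setIntegral_const, measureReal_def, hvol1, one_smul]
  rw [hconst, ← integral_sub (integrableOn_const (C := F θ p a) hvol.ne) hInt]
  have hnorm := norm_setIntegral_le_of_norm_le_const (μ := volume)
    (s := Ioc a (a+1)) (f := fun t => F θ p a - F θ p t) hvol
    (C := C) (fun t ht => by
      rw [Real.norm_eq_abs]
      exact hMVT t ⟨ht.1.le, ht.2⟩)
  rw [Real.norm_eq_abs, measureReal_def, hvol1, mul_one] at hnorm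
  exact hnorm

lemma cov (θ : ℝ) {p : ℝ} (hp : 0 < p) :
    ∫ t in Ioi (0:ℝ), F θ p t = p ^ (θ-1) * ∫ y in Ioi (0:ℝ), sin y ^ 2 / y ^ θ := by
  have h := MeasureTheory.integral_comp_mul_left_Ioi
    (fun y : ℝ => sin y ^ 2 / y ^ θ) 0 hp
  rw [mul_zero] at h
  have hpθ : (0:ℝ) < p ^ θ := Real.rpow_pos_of_pos hp θ
  have heq : EqOn (fun t : ℝ => F θ p t)
      (fun t : ℝ => p ^ θ * (sin (p*t) ^ 2 / (p*t) ^ θ)) (Ioi 0) := by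
    intro t ht
    simp only [F]
    rw [Real.mul_rpow hp.le (le_of_lt ht), ← mul_div_assoc,
      mul_div_mul_left _ _ hpθ.ne']
  calc ∫ t in Ioi (0:ℝ), F θ p t
      = ∫ t in Ioi (0:ℝ), p ^ θ * (sin (p*t) ^ 2 / (p*t) ^ θ) :=
        setIntegral_congr_fun measurableSet_Ioi heq
    _ = p ^ θ * ∫ t in Ioi (0:ℝ), sin (p*t) ^ 2 / (p*t) ^ θ := integral_const_mul _ _
    _ = p ^ θ * (p⁻¹ * ∫ y in Ioi (0:ℝ), sin y ^ 2 / y ^ θ) := by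
        rw [h, smul_eq_mul]
    _ = p ^ (θ-1) * ∫ y in Ioi (0:ℝ), sin y ^ 2 / y ^ θ := by
        rw [Real.rpow_sub hp, Real.rpow_one]
        field_simp

lemma b0_bound (θ : ℝ) (hθ1 : 2 < θ) (hθ2 : θ < 3) {p : ℝ} (hp : 0 ≤ p) :
    |∫ t in Ioc (0:ℝ) 1, F θ p t| ≤ p^2 / (3-θ) := by
  have hInt : IntegrableOn (fun t => F θ p t) (Ioc (0:ℝ) 1) := by
    refine (integrable θ (by linarith) hθ2 hp).mono_set ?_
    intro t ht; exact ht.1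
  have hIntg : IntegrableOn (fun t : ℝ => p^2 * t ^ (2-θ)) (Ioc (0:ℝ) 1) := by
    have := (intervalIntegrable_iff_integrableOn_Ioc_of_le
      (by norm_num : (0:ℝ) ≤ 1)).1 (intervalIntegral.intervalIntegrable_rpow' (a := 0) (b := 1)
      (r := 2-θ) (by linarith))
    exact this.const_mul (p^2)
  have hnn : 0 ≤ ∫ t in Ioc (0:ℝ) 1, F θ p t :=
    setIntegral_nonneg measurableSet_Ioc (fun t ht => F_nonneg θ p t ht.1)
  rw [abs_of_nonneg hnn]
  have hle : (∫ t in Ioc (0:ℝ) 1, F θ p t) ≤ ∫ t in Ioc (0:ℝ) 1, p^2 * t ^ (2-θ) :=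
    setIntegral_mono_on hInt hIntg measurableSet_Ioc (fun t ht => F_le_sq θ p ht.1 hp)
  refine hle.trans ?_
  rw [integral_const_mul]
  have hval : (∫ t in Ioc (0:ℝ) 1, t ^ (2-θ)) = 1 / (3-θ) := by
    rw [← intervalIntegral.integral_of_le (by norm_num : (0:ℝ) ≤ 1)]
    rw [integral_rpow (Or.inl (by linarith))]
    rw [Real.one_rpow, Real.zero_rpow (by intro hc; linarith [hc])]
    norm_num
    ring_nf
  rw [hval]
  exact le_of_eq (by ring)

end Stmt6Aux

/-- `α̂(k) = 4 Σ_{x≥1} sin²(πkx)/x^θ`, the Fourier transform of the long-range coupling. -/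
def ahat (θ k : ℝ) : ℝ := 4 * ∑' x : ℕ, sin (π * k * ((x : ℝ) + 1)) ^ 2 / ((x : ℝ) + 1) ^ θ

/-- `C(θ) = 4 π^{θ-1} ∫₀^∞ sin²(y)/y^θ dy` for `2 < θ < 3`. -/
def Cθ (θ : ℝ) : ℝ := 4 * π ^ (θ - 1) * ∫ y in Set.Ioi (0 : ℝ), sin y ^ 2 / y ^ θ

theorem stmt6 (θ : ℝ) (hθ1 : 2 < θ) (hθ2 : θ < 3) :
    ∃ K > 0, ∀ k ∈ Set.Ioc (0 : ℝ) (1 / 2),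
      |ahat θ k - Cθ θ * k ^ (θ - 1)| ≤ K * k ^ 2 := by
  have hπ := Real.pi_pos
  set T : ℝ := ∑' n : ℕ, ((n:ℝ)+1) ^ (1-θ) with hTdef
  have hT0 : 0 ≤ T :=
    tsum_nonneg fun n => (Real.rpow_pos_of_pos (by positivity) _).le
  refine ⟨4*((2+θ)*π^2*T + π^2/(3-θ)), ?_, ?_⟩
  · have h1 : 0 < π^2/(3-θ) := div_pos (by positivity) (by linarith)
    have h2 : 0 ≤ (2+θ)*π^2*T :=
      mul_nonneg (mul_nonneg (by linarith) (sq_nonneg _)) hT0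
    linarith
  intro k hk
  set p : ℝ := π * k with hpdef
  have hp : 0 < p := mul_pos hπ hk.1
  have hI : IntegrableOn (fun t => Stmt6Aux.F θ p t) (Ioi 0) volume :=
    Stmt6Aux.integrable θ (by linarith) hθ2 hp.le
  have hUnion : (⋃ n : ℕ, Ioc ((n:ℝ)) ((n:ℝ)+1)) = Ioi 0 := Stmt6Aux.iUnion_Ioc_eq
  have hb : HasSum (fun n : ℕ => ∫ t in Ioc ((n:ℝ)) ((n:ℝ)+1), Stmt6Aux.F θ p t)
      (∫ t in Ioi (0:ℝ), Stmt6Aux.F θ p t) := by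
    have := MeasureTheory.hasSum_integral_iUnion (μ := volume)
      (s := fun n : ℕ => Ioc ((n:ℝ)) ((n:ℝ)+1)) (f := fun t => Stmt6Aux.F θ p t)
      (fun _ => measurableSet_Ioc) Stmt6Aux.pairwise_disj (by rw [hUnion]; exact hI)
    rwa [hUnion] at this
  set b : ℕ → ℝ := fun n => ∫ t in Ioc ((n:ℝ)) ((n:ℝ)+1), Stmt6Aux.F θ p t with hbdef
  set a : ℕ → ℝ := fun n => Stmt6Aux.F θ p ((n:ℝ)+1) with hadef
  have hasum : Summable a := by
    refine Summable.of_nonneg_of_le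
      (fun n => Stmt6Aux.F_nonneg θ p _ (by positivity)) (fun n => ?_)
      (Stmt6Aux.summable_rpow_shift (by linarith : -θ < -1))
    exact Stmt6Aux.F_le_one_div θ p (by positivity)
  have hbsum : Summable b := hb.summable
  have hb1 : Summable (fun n => b (n+1)) := (summable_nat_add_iff 1).mpr hbsum
  have hkey : (∑' n, a n) - (∫ t in Ioi (0:ℝ), Stmt6Aux.F θ p t)
      = (∑' n, (a n - b (n+1))) - b 0 := by
    rw [← hb.tsum_eq, Summable.tsum_eq_zero_add hbsum, Summable.tsum_sub hasum hb1]
    ring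
  have hterm : ∀ n : ℕ, |a n - b (n+1)| ≤ (2+θ)*p^2*((n:ℝ)+1)^(1-θ) := by
    intro n
    have h := Stmt6Aux.keybound θ hθ1 hθ2 hp.le n
    have hc : b (n+1) = ∫ t in Ioc ((n:ℝ)+1) (((n:ℝ)+1)+1), Stmt6Aux.F θ p t := by
      rw [hbdef]
      push_cast
      ring_nf
    rw [hadef, hc]
    exact h
  have hsum_bound : |∑' n, (a n - b (n+1))| ≤ (2+θ)*p^2*T := by
    have hs1 : Summable (fun n => a n - b (n+1)) := hasum.sub hb1
    have hs2 : Summable (fun n => |a n - b (n+1)|) := hs1.abs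
    have hs3 : Summable (fun n : ℕ => (2+θ)*p^2*((n:ℝ)+1)^(1-θ)) :=
      (Stmt6Aux.summable_rpow_shift (by linarith : 1-θ < -1)).mul_left _
    calc |∑' n, (a n - b (n+1))| ≤ ∑' n, |a n - b (n+1)| := by
          simpa [Real.norm_eq_abs] using norm_tsum_le_tsum_norm (f := fun n => a n - b (n+1))
            (by simpa [Real.norm_eq_abs] using hs2)
      _ ≤ ∑' n : ℕ, (2+θ)*p^2*((n:ℝ)+1)^(1-θ) := Summable.tsum_le_tsum hterm hs2 hs3
      _ = (2+θ)*p^2*T := by rw [hTdef, tsum_mul_left]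
  have hb0 : |b 0| ≤ p^2/(3-θ) := by
    have h := Stmt6Aux.b0_bound θ hθ1 hθ2 hp.le
    have hc : b 0 = ∫ t in Ioc (0:ℝ) 1, Stmt6Aux.F θ p t := by
      rw [hbdef]; norm_num
    rw [hc]
    exact h
  have hCov : Cθ θ * k ^ (θ-1) = 4 * ∫ t in Ioi (0:ℝ), Stmt6Aux.F θ p t := by
    rw [Stmt6Aux.cov θ hp, Cθ, hpdef, Real.mul_rpow hπ.le hk.1.le]
    ring
  have hAhat : ahat θ k = 4 * ∑' n, a n := by
    rw [ahat]
    simp only [hadef, Stmt6Aux.F, hpdef]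
  have final : |ahat θ k - Cθ θ * k ^ (θ-1)| ≤ 4*((2+θ)*p^2*T + p^2/(3-θ)) := by
    rw [hAhat, hCov, ← mul_sub, hkey, abs_mul]
    have habs : |(∑' n, (a n - b (n+1))) - b 0| ≤ (2+θ)*p^2*T + p^2/(3-θ) :=
      (abs_sub _ _).trans (add_le_add hsum_bound hb0)
    rw [show |(4:ℝ)| = 4 by norm_num]
    exact mul_le_mul_of_nonneg_left habs (by norm_num)
  refine final.trans (le_of_eq ?_)
  have hpk : p^2 = π^2*k^2 := by rw [hpdef]; ring
  rw [hpk]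
  ring
end
end

section
/- Let θ = 3. There exists a constant K > 0 such that for all k ∈ (0, 1/2] one has |α̂(k) − 4π²·k²·log(1/k)| ≤ K·k². -/
noncomputable section
open Real

lemma sinsq_err {t : ℝ} (h0 : 0 ≤ t) (h1 : t ≤ 1) :
    |Real.sin t ^ 2 - t ^ 2| ≤ t ^ 4 / 2 := by
  rcases eq_or_lt_of_le h0 with rfl | ht
  · simp
  have hs1 : Real.sin t ≤ t := Real.sin_le h0
  have hs2 : t - t ^ 3 / 4 < Real.sin t := by have := Real.sin_gt_sub_cube ht; have := pow_pos ht 3; linarith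
  have hsq : Real.sin t ^ 2 ≤ t ^ 2 := Real.sin_sq_le_sq
  rw [abs_sub_comm, abs_of_nonneg (by linarith)]
  nlinarith [sq_nonneg t, sq_nonneg (t - Real.sin t), sq_nonneg (t + Real.sin t)]

lemma sinsq_le_self {t : ℝ} (h0 : 0 ≤ t) : Real.sin t ^ 2 ≤ t := by
  have h1 : |Real.sin t| ≤ 1 := Real.abs_sin_le_one _
  have h2 : |Real.sin t| ≤ t := (Real.abs_sin_le_abs).trans_eq (abs_of_nonneg h0)
  calc Real.sin t ^ 2 = |Real.sin t| * |Real.sin t| := by rw [← abs_mul, abs_mul_self]; ring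
    _ ≤ 1 * t := mul_le_mul h1 h2 (abs_nonneg _) one_pos.le
    _ = t := one_mul t

lemma sum_range_add_one (N : ℕ) :
    ∑ i ∈ Finset.range N, ((i : ℝ) + 1) = N * (N + 1) / 2 := by
  induction N with
  | zero => simp
  | succ n ih => rw [Finset.sum_range_succ, ih]; push_cast; ring

set_option maxHeartbeats 2000000

theorem stmt7 :
    ∃ K > 0, ∀ k ∈ Set.Ioc (0 : ℝ) (1 / 2),
      |ahat 3 k - 4 * π ^ 2 * k ^ 2 * Real.log (1 / k)| ≤ K * k ^ 2 := by
  refine ⟨300, by norm_num, ?_⟩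
  rintro k ⟨hk0, hk2⟩
  have hπ : (0:ℝ) < π := Real.pi_pos
  have hπk : 0 < π * k := by positivity
  set f : ℕ → ℝ := fun x => Real.sin (π * k * ((x:ℝ)+1)) ^ 2 / ((x:ℝ)+1) ^ (3:ℕ) with hf
  have hrw : ahat 3 k = 4 * ∑' x : ℕ, f x := by
    unfold ahat
    congr 1
    refine tsum_congr fun x => ?_
    rw [hf]
    norm_num
  have hS : Summable (fun x : ℕ => 1 / ((x:ℝ)+1)^(3:ℕ)) := by
    have h := (Real.summable_one_div_nat_pow (p := 3)).2 (by norm_num)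
    exact ((summable_nat_add_iff 1).2 h).congr fun n => by push_cast; ring
  have hfnn : ∀ x : ℕ, 0 ≤ f x := fun x => by rw [hf]; positivity
  have hsummable : Summable f := by
    refine Summable.of_nonneg_of_le hfnn (fun x => ?_) hS
    rw [hf]
    have hb : (0:ℝ) < ((x:ℝ)+1)^(3:ℕ) := by positivity
    exact div_le_div₀ zero_le_one (Real.sin_sq_le_one _) hb le_rfl
  set N := ⌊1/(π*k)⌋₊ with hNdef
  have hNle : (N:ℝ) ≤ 1/(π*k) := Nat.floor_le (by positivity)
  have hNlt : 1/(π*k) < (N:ℝ) + 1 := Nat.lt_floor_add_one _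
  have hkN : π * k * (N:ℝ) ≤ 1 := by
    rw [le_div_iff₀ hπk] at hNle; nlinarith
  have hkN1 : 1 < π * k * ((N:ℝ)+1) := by
    rw [div_lt_iff₀ hπk] at hNlt; nlinarith
  have hNpos : (0:ℝ) < (N:ℝ) + 1 := by positivity
  have hπk' : π * k ≤ 1.575 := by nlinarith [Real.pi_lt_d2]
  have hsplit := Summable.sum_add_tsum_nat_add (f := f) N hsummable
  set T := ∑' i : ℕ, f (i + N) with hT
  have hTsum : Summable fun i : ℕ => f (i + N) := (summable_nat_add_iff N).2 hsummable
  have hT0 : 0 ≤ T := tsum_nonneg fun i => hfnn _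
  -- tail bound
  have hTle : T ≤ 2 * π^2 * k^2 := by
    have key : T ≤ 2*π*k/((N:ℝ)+1) := by
      refine Summable.tsum_le_of_sum_le hTsum fun s => ?_
      obtain ⟨n, hn⟩ := s.exists_nat_subset_range
      have step : ∀ i : ℕ, f (i+N) ≤
          (fun j : ℕ => 2*π*k/((N:ℝ)+1+j)) i - (fun j : ℕ => 2*π*k/((N:ℝ)+1+j)) (i+1) := by
        intro i
        simp only []
        set m : ℝ := (N:ℝ) + 1 + i with hm
        have hm1 : (1:ℝ) ≤ m := by
          have h1 : (0:ℝ) ≤ (N:ℝ) := Nat.cast_nonneg N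
          have h2 : (0:ℝ) ≤ (i:ℝ) := Nat.cast_nonneg i
          rw [hm]; linarith
        have hm0 : (0:ℝ) < m := by linarith
        have hcast : ((i+N:ℕ):ℝ) + 1 = m := by rw [hm]; push_cast; ring
        have hfi : f (i+N) = Real.sin (π*k*(((i+N:ℕ):ℝ)+1))^2 / (((i+N:ℕ):ℝ)+1)^(3:ℕ) := rfl
        have hnum : Real.sin (π*k*m)^2 ≤ π*k*m := sinsq_le_self (by positivity)
        have hcast2 : ((i+1:ℕ):ℝ) = (i:ℝ) + 1 := by push_cast; ring
        calc f (i+N) = Real.sin (π*k*m)^2 / m^(3:ℕ) := by rw [hfi, hcast]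
          _ ≤ (π*k*m) / m^(3:ℕ) := div_le_div₀ (by positivity) hnum (by positivity) le_rfl
          _ = π*k/m^2 := by field_simp
          _ ≤ 2*π*k/m - 2*π*k/(m+1) := by
              rw [div_sub_div _ _ (ne_of_gt hm0) (by positivity),
                div_le_div_iff₀ (by positivity) (by positivity)]
              nlinarith
          _ = 2*π*k/((N:ℝ)+1+i) - 2*π*k/((N:ℝ)+1+(i+1:ℕ)) := by rw [hcast2, hm]; ring_nf
      calc ∑ i ∈ s, f (i+N) ≤ ∑ i ∈ Finset.range n, f (i+N) :=
            Finset.sum_le_sum_of_subset_of_nonneg hn (fun i _ _ => hfnn _)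
        _ ≤ ∑ i ∈ Finset.range n,
            ((fun j : ℕ => 2*π*k/((N:ℝ)+1+j)) i - (fun j : ℕ => 2*π*k/((N:ℝ)+1+j)) (i+1)) :=
            Finset.sum_le_sum fun i _ => step i
        _ = 2*π*k/((N:ℝ)+1+(0:ℕ)) - 2*π*k/((N:ℝ)+1+(n:ℕ)) :=
            Finset.sum_range_sub' (fun j : ℕ => 2*π*k/((N:ℝ)+1+j)) n
        _ ≤ 2*π*k/((N:ℝ)+1) := by
            have : (0:ℝ) ≤ 2*π*k/((N:ℝ)+1+(n:ℕ)) := by positivity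
            simp only [Nat.cast_zero, add_zero]
            linarith
    have h1N : 2*π*k/((N:ℝ)+1) ≤ 2*π*k*(π*k) := by
      rw [div_le_iff₀ hNpos]; nlinarith
    calc T ≤ 2*π*k/((N:ℝ)+1) := key
      _ ≤ 2*π*k*(π*k) := h1N
      _ = 2*π^2*k^2 := by ring
  -- main sum vs harmonic
  have hhar : ((harmonic N : ℚ) : ℝ) = ∑ i ∈ Finset.range N, 1/((i:ℝ)+1) := by
    simp only [harmonic, Rat.cast_sum, Rat.cast_inv, Rat.cast_natCast]
    push_cast
    simp [one_div]
  have hmain : |∑ i ∈ Finset.range N, f i - π^2*k^2*((harmonic N : ℚ):ℝ)| ≤ π^2 * k^2 := by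
    rw [hhar, Finset.mul_sum, ← Finset.sum_sub_distrib]
    refine (Finset.abs_sum_le_sum_abs _ _).trans ?_
    have hterm : ∀ i ∈ Finset.range N, |f i - π^2*k^2*(1/((i:ℝ)+1))| ≤ (π*k)^4/2 * ((i:ℝ)+1) := by
      intro i hi
      have hi' : (i:ℝ)+1 ≤ (N:ℝ) := by
        have h := Finset.mem_range.1 hi
        exact_mod_cast Nat.succ_le_of_lt h
      have hp : (0:ℝ) < ((i:ℝ)+1) := by positivity
      have ht0 : 0 ≤ π*k*((i:ℝ)+1) := by positivity
      have ht1 : π*k*((i:ℝ)+1) ≤ 1 := by nlinarith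
      have hfi : f i = Real.sin (π*k*((i:ℝ)+1))^2 / ((i:ℝ)+1)^(3:ℕ) := rfl
      have heq : f i - π^2*k^2*(1/((i:ℝ)+1))
          = (Real.sin (π*k*((i:ℝ)+1))^2 - (π*k*((i:ℝ)+1))^2)/((i:ℝ)+1)^(3:ℕ) := by
        rw [hfi]; field_simp
      rw [heq, abs_div, abs_of_pos (by positivity : (0:ℝ) < ((i:ℝ)+1)^(3:ℕ))]
      calc |Real.sin (π*k*((i:ℝ)+1))^2 - (π*k*((i:ℝ)+1))^2| / ((i:ℝ)+1)^(3:ℕ)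
          ≤ ((π*k*((i:ℝ)+1))^4/2) / ((i:ℝ)+1)^(3:ℕ) :=
            div_le_div₀ (by positivity) (sinsq_err ht0 ht1) (by positivity) le_rfl
        _ = (π*k)^4/2 * ((i:ℝ)+1) := by field_simp
    calc ∑ i ∈ Finset.range N, |f i - π^2*k^2*(1/((i:ℝ)+1))|
        ≤ ∑ i ∈ Finset.range N, (π*k)^4/2 * ((i:ℝ)+1) := Finset.sum_le_sum hterm
      _ = (π*k)^4/2 * ((N:ℝ)*((N:ℝ)+1)/2) := by rw [← Finset.mul_sum, sum_range_add_one]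
      _ ≤ π^2 * k^2 := by
          have h0N : (0:ℝ) ≤ (N:ℝ) := Nat.cast_nonneg N
          have hun0 : 0 ≤ π*k*(N:ℝ) := mul_nonneg hπk.le h0N
          have h1 : (π*k*(N:ℝ))^2 ≤ 1 := pow_le_one₀ hun0 hkN
          have h2 : (π*k*(N:ℝ))*(π*k) ≤ 1.575 := by
            have := mul_le_mul hkN hπk' hπk.le zero_le_one
            linarith
          have hu2 : (0:ℝ) ≤ (π*k)^2 := sq_nonneg _
          have heq : (π*k)^4/2 * ((N:ℝ)*((N:ℝ)+1)/2)
              = ((π*k*(N:ℝ))^2*(π*k)^2 + ((π*k*(N:ℝ))*(π*k))*(π*k)^2)/4 := by ring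
          have heq2 : π^2*k^2 = (π*k)^2 := by ring
          rw [heq, heq2]
          have hA := mul_le_mul_of_nonneg_right h1 hu2
          have hB := mul_le_mul_of_nonneg_right h2 hu2
          rw [one_mul] at hA
          linarith
  -- harmonic vs log
  have hlog : |((harmonic N : ℚ):ℝ) - Real.log (1/k)| ≤ 4 := by
    have h1 : Real.log (1/(π*k)) ≤ ((harmonic N : ℚ):ℝ) := by
      have h := log_le_harmonic_floor (1/(π*k)) (by positivity)
      rwa [← hNdef] at h
    have hsplitlog : Real.log (1/k) = Real.log (1/(π*k)) + Real.log π := by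
      rw [← Real.log_mul (by positivity) (ne_of_gt hπ)]
      congr 1
      field_simp
    have hπle : Real.log π ≤ π - 1 := Real.log_le_sub_one_of_pos hπ
    have hπ0 : 0 ≤ Real.log π := Real.log_nonneg (by linarith [Real.pi_gt_three])
    have hup : ((harmonic N : ℚ):ℝ) - Real.log (1/k) ≤ 1 := by
      by_cases hc : 1 ≤ 1/(π*k)
      · have h2 := harmonic_floor_le_one_add_log (1/(π*k)) hc
        rw [← hNdef] at h2
        linarith
      · have hN0 : N = 0 := by
          rw [hNdef]
          exact Nat.floor_eq_zero.2 (lt_of_not_ge hc)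
        have hlk : 0 ≤ Real.log (1/k) := Real.log_nonneg (by rw [le_div_iff₀ hk0]; linarith)
        have hh0 : ((harmonic 0 : ℚ):ℝ) = 0 := by norm_num
        rw [hN0, hh0]
        linarith
    rw [abs_le]
    constructor
    · nlinarith [Real.pi_lt_d2]
    · linarith
  -- assembly
  have hfin : ahat 3 k - 4*π^2*k^2*Real.log (1/k)
      = 4*((∑ i ∈ Finset.range N, f i - π^2*k^2*((harmonic N:ℚ):ℝ))
           + π^2*k^2*(((harmonic N:ℚ):ℝ) - Real.log (1/k)) + T) := by
    rw [hrw, ← hsplit]; ring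
  rw [hfin, abs_mul, abs_of_nonneg (by norm_num : (0:ℝ) ≤ 4)]
  have hB : |π^2*k^2*(((harmonic N:ℚ):ℝ) - Real.log (1/k))| ≤ 4*(π^2*k^2) := by
    rw [abs_mul, abs_of_nonneg (by positivity : (0:ℝ) ≤ π^2*k^2)]
    nlinarith [hlog, sq_nonneg (π*k), mul_nonneg (sq_nonneg π) (sq_nonneg k)]
  have htri : |(∑ i ∈ Finset.range N, f i - π^2*k^2*((harmonic N:ℚ):ℝ))
           + π^2*k^2*(((harmonic N:ℚ):ℝ) - Real.log (1/k)) + T|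
      ≤ π^2*k^2 + 4*(π^2*k^2) + 2*π^2*k^2 := by
    have := abs_add_le ((∑ i ∈ Finset.range N, f i - π^2*k^2*((harmonic N:ℚ):ℝ))
           + π^2*k^2*(((harmonic N:ℚ):ℝ) - Real.log (1/k))) T
    have h2 := abs_add_le (∑ i ∈ Finset.range N, f i - π^2*k^2*((harmonic N:ℚ):ℝ))
           (π^2*k^2*(((harmonic N:ℚ):ℝ) - Real.log (1/k)))
    have hTabs : |T| ≤ 2*π^2*k^2 := by rw [abs_of_nonneg hT0]; exact hTle
    linarith
  calc 4 * |(∑ i ∈ Finset.range N, f i - π^2*k^2*((harmonic N:ℚ):ℝ))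
           + π^2*k^2*(((harmonic N:ℚ):ℝ) - Real.log (1/k)) + T|
      ≤ 4 * (π^2*k^2 + 4*(π^2*k^2) + 2*π^2*k^2) := by linarith
    _ ≤ 300 * k^2 := by
        have hpi2 : π^2 ≤ 10 := by nlinarith [Real.pi_lt_d2, Real.pi_pos]
        nlinarith [mul_le_mul_of_nonneg_right hpi2 (sq_nonneg k)]
end
end

section
/- Let θ ∈ (2,3) ∪ (3,∞). There exists a constant C > 0 such that for all k, k' ∈ [−1/2, 1/2) one has |α̂(k+k') − α̂(k) − α̂(k')| ≤ C·ω(k)·ω(k'), where ω(k) := √(α̂(k)) and α̂ is understood as a 1-periodic function on ℝ. -/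
noncomputable section
open Real

/-- The dispersion relation `ω(k) = √(α̂(k))`. -/
def disp (θ k : ℝ) : ℝ := Real.sqrt (ahat θ k)

/-- Cauchy–Schwarz inequality for `tsum`s over `ℕ`. -/
lemma tsum_cs (f g : ℕ → ℝ) (hf : ∀ n, 0 ≤ f n) (hg : ∀ n, 0 ≤ g n)
    (hf2 : Summable (fun n => f n ^ 2)) (hg2 : Summable (fun n => g n ^ 2)) :
    ∑' n, f n * g n ≤ Real.sqrt (∑' n, f n ^ 2) * Real.sqrt (∑' n, g n ^ 2) := by
  have hfg : Summable (fun n => f n * g n) := by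
    refine Summable.of_nonneg_of_le (fun n => mul_nonneg (hf n) (hg n)) (fun n => ?_)
      (((hf2.add hg2)).div_const 2)
    nlinarith [sq_nonneg (f n - g n)]
  refine hfg.tsum_le_of_sum_le fun s => ?_
  calc ∑ i ∈ s, f i * g i
      ≤ Real.sqrt (∑ i ∈ s, f i ^ 2) * Real.sqrt (∑ i ∈ s, g i ^ 2) :=
        Real.sum_mul_le_sqrt_mul_sqrt s f g
    _ ≤ _ := by
        gcongr
        · exact hf2.sum_le_tsum s (fun i _ => sq_nonneg _)
        · exact hg2.sum_le_tsum s (fun i _ => sq_nonneg _)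

lemma sin_sq_key (A B : ℝ) :
    |Real.sin (A + B) ^ 2 - Real.sin A ^ 2 - Real.sin B ^ 2|
      ≤ 4 * (|Real.sin A| * |Real.sin B|) := by
  have hA := Real.sin_sq_add_cos_sq A
  have hB := Real.sin_sq_add_cos_sq B
  have e : Real.sin (A + B) ^ 2 - Real.sin A ^ 2 - Real.sin B ^ 2
      = 2 * (Real.sin A * Real.cos A * Real.sin B * Real.cos B)
        - 2 * (Real.sin A ^ 2 * Real.sin B ^ 2) := by
    rw [Real.sin_add]
    linear_combination (Real.sin A) ^ 2 * hB + (Real.sin B) ^ 2 * hA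
  have hp : |Real.sin A * Real.cos A * Real.sin B * Real.cos B|
      ≤ |Real.sin A| * |Real.sin B| := by
    rw [abs_mul, abs_mul, abs_mul]
    have h1 : |Real.cos A| * |Real.cos B| ≤ 1 :=
      mul_le_one₀ (Real.abs_cos_le_one A) (abs_nonneg _) (Real.abs_cos_le_one B)
    nlinarith [mul_nonneg (abs_nonneg (Real.sin A)) (abs_nonneg (Real.sin B)),
      abs_nonneg (Real.cos A), abs_nonneg (Real.cos B)]
  have hq : Real.sin A ^ 2 * Real.sin B ^ 2 ≤ |Real.sin A| * |Real.sin B| := by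
    have h1 : Real.sin A ^ 2 * Real.sin B ^ 2 = (|Real.sin A| * |Real.sin B|) ^ 2 := by
      rw [mul_pow, sq_abs, sq_abs]
    rw [h1]
    have h2 : |Real.sin A| * |Real.sin B| ≤ 1 :=
      mul_le_one₀ (Real.abs_sin_le_one A) (abs_nonneg _) (Real.abs_sin_le_one B)
    nlinarith [mul_nonneg (abs_nonneg (Real.sin A)) (abs_nonneg (Real.sin B))]
  rw [e, abs_le]
  have h3 := le_abs_self (Real.sin A * Real.cos A * Real.sin B * Real.cos B)
  have h4 := neg_abs_le (Real.sin A * Real.cos A * Real.sin B * Real.cos B)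
  have h5 : 0 ≤ Real.sin A ^ 2 * Real.sin B ^ 2 := by positivity
  constructor <;> nlinarith

theorem stmt11 (θ : ℝ) (hθ : (2 < θ ∧ θ < 3) ∨ 3 < θ) :
    ∃ C > 0, ∀ k ∈ Set.Ico (-(1 : ℝ) / 2) (1 / 2), ∀ k' ∈ Set.Ico (-(1 : ℝ) / 2) (1 / 2),
      |ahat θ (k + k') - ahat θ k - ahat θ k'| ≤ C * disp θ k * disp θ k' := by
  have hθ1 : 1 < θ := by rcases hθ with ⟨h, _⟩ | h <;> linarith
  -- summability of the basic series
  have hbase : Summable (fun x : ℕ => 1 / ((x : ℝ) + 1) ^ θ) := by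
    have : Summable (fun n : ℕ => 1 / (n : ℝ) ^ θ) :=
      (Real.summable_one_div_nat_rpow).2 hθ1
    have h := (summable_nat_add_iff 1).2 this
    refine h.congr fun n => ?_
    push_cast
    ring_nf
  have hS : ∀ x : ℕ, (0:ℝ) < ((x : ℝ) + 1) ^ θ := fun x =>
    Real.rpow_pos_of_pos (by positivity) θ
  have hterm : ∀ c : ℝ, ∀ x : ℕ,
      (0:ℝ) ≤ Real.sin (π * c * ((x : ℝ) + 1)) ^ 2 / ((x : ℝ) + 1) ^ θ := by
    intro c x; positivity
  have hsum : ∀ c : ℝ,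
      Summable (fun x : ℕ => Real.sin (π * c * ((x : ℝ) + 1)) ^ 2 / ((x : ℝ) + 1) ^ θ) := by
    intro c
    refine Summable.of_nonneg_of_le (hterm c) (fun x => ?_) hbase
    rw [div_le_div_iff₀ (hS x) (hS x)]
    have : Real.sin (π * c * ((x : ℝ) + 1)) ^ 2 ≤ 1 := by
      rw [← sq_abs]
      nlinarith [Real.abs_sin_le_one (π * c * ((x : ℝ) + 1)), abs_nonneg (Real.sin (π * c * ((x : ℝ) + 1)))]
    nlinarith [(hS x).le]
  refine ⟨4, by norm_num, fun k _ k' _ => ?_⟩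
  set a : ℕ → ℝ := fun x => Real.sin (π * k * ((x : ℝ) + 1)) with ha
  set b : ℕ → ℝ := fun x => Real.sin (π * k' * ((x : ℝ) + 1)) with hb
  set S : ℕ → ℝ := fun x => ((x : ℝ) + 1) ^ θ with hSdef
  -- the three summable series
  have sk := hsum k
  have sk' := hsum k'
  have skk' := hsum (k + k')
  -- difference of tsums
  have hdiff : ahat θ (k + k') - ahat θ k - ahat θ k'
      = 4 * ∑' x : ℕ, (Real.sin (π * (k + k') * ((x : ℝ) + 1)) ^ 2 / S x
          - a x ^ 2 / S x - b x ^ 2 / S x) := by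
    rw [(skk'.sub sk).tsum_sub sk', skk'.tsum_sub sk]
    simp only [ahat]; ring
  set d : ℕ → ℝ := fun x => Real.sin (π * (k + k') * ((x : ℝ) + 1)) ^ 2 / S x
      - a x ^ 2 / S x - b x ^ 2 / S x with hd
  have hdsum : Summable d := (skk'.sub sk).sub sk'
  -- pointwise bound
  have hpt : ∀ x : ℕ, |d x| ≤ 4 * ((|a x| / Real.sqrt (S x)) * (|b x| / Real.sqrt (S x))) := by
    intro x
    have hSx := hS x
    have hsq : Real.sqrt (S x) * Real.sqrt (S x) = S x := Real.mul_self_sqrt hSx.le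
    have e1 : d x = (Real.sin (π * (k + k') * ((x : ℝ) + 1)) ^ 2 - a x ^ 2 - b x ^ 2) / S x := by
      simp only [hd]; ring
    have e2 : π * (k + k') * ((x : ℝ) + 1)
        = π * k * ((x : ℝ) + 1) + π * k' * ((x : ℝ) + 1) := by ring
    rw [e1, abs_div, abs_of_pos hSx, e2]
    have := sin_sq_key (π * k * ((x : ℝ) + 1)) (π * k' * ((x : ℝ) + 1))
    rw [div_le_iff₀ hSx]
    calc |Real.sin (π * k * ((x : ℝ) + 1) + π * k' * ((x : ℝ) + 1)) ^ 2 - a x ^ 2 - b x ^ 2|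
        ≤ 4 * (|a x| * |b x|) := this
      _ = 4 * (|a x| / Real.sqrt (S x) * (|b x| / Real.sqrt (S x))) * S x := by
          field_simp
          rw [Real.sq_sqrt (show (0:ℝ) ≤ S x from hSx.le), mul_div_assoc, div_self (show S x ≠ 0 from hSx.ne'), mul_one]
  -- Cauchy–Schwarz
  have hf2 : Summable (fun x => (|a x| / Real.sqrt (S x)) ^ 2) := by
    refine sk.congr fun x => ?_
    rw [div_pow, sq_abs, Real.sq_sqrt (hS x).le]
  have hg2 : Summable (fun x => (|b x| / Real.sqrt (S x)) ^ 2) := by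
    refine sk'.congr fun x => ?_
    rw [div_pow, sq_abs, Real.sq_sqrt (hS x).le]
  have hfnn : ∀ x, 0 ≤ |a x| / Real.sqrt (S x) := fun x => by positivity
  have hgnn : ∀ x, 0 ≤ |b x| / Real.sqrt (S x) := fun x => by positivity
  have hcs := tsum_cs _ _ hfnn hgnn hf2 hg2
  have hf2val : ∑' x, (|a x| / Real.sqrt (S x)) ^ 2
      = ∑' x, a x ^ 2 / S x := by
    refine tsum_congr fun x => ?_
    rw [div_pow, sq_abs, Real.sq_sqrt (hS x).le]
  have hg2val : ∑' x, (|b x| / Real.sqrt (S x)) ^ 2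
      = ∑' x, b x ^ 2 / S x := by
    refine tsum_congr fun x => ?_
    rw [div_pow, sq_abs, Real.sq_sqrt (hS x).le]
  -- relate to disp
  have hdisp : ∀ c : ℝ, Real.sqrt (∑' x : ℕ, Real.sin (π * c * ((x : ℝ) + 1)) ^ 2 / S x)
      = disp θ c / 2 := by
    intro c
    have h4 : ahat θ c = 4 * ∑' x : ℕ, Real.sin (π * c * ((x : ℝ) + 1)) ^ 2 / S x := rfl
    have : disp θ c = 2 * Real.sqrt (∑' x : ℕ, Real.sin (π * c * ((x : ℝ) + 1)) ^ 2 / S x) := by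
      rw [disp, h4, show (4:ℝ) = 2^2 by norm_num, Real.sqrt_mul (by positivity), Real.sqrt_sq (by norm_num : (0:ℝ) ≤ 2)]
    rw [this]; ring
  -- summability of the product
  have hprodsum : Summable (fun x => (|a x| / Real.sqrt (S x)) * (|b x| / Real.sqrt (S x))) := by
    refine Summable.of_nonneg_of_le (fun x => mul_nonneg (hfnn x) (hgnn x)) (fun x => ?_)
      ((hf2.add hg2).div_const 2)
    nlinarith [sq_nonneg (|a x| / Real.sqrt (S x) - |b x| / Real.sqrt (S x))]
  -- assemble
  calc |ahat θ (k + k') - ahat θ k - ahat θ k'|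
      = 4 * |∑' x, d x| := by rw [hdiff]; rw [abs_mul]; norm_num
    _ ≤ 4 * ∑' x, |d x| := by
        have h1 : |∑' x, d x| ≤ ∑' x, |d x| := by
          simpa [Real.norm_eq_abs] using
            norm_tsum_le_tsum_norm (f := d) (by simpa [Real.norm_eq_abs] using hdsum.abs)
        linarith
    _ ≤ 4 * ∑' x, 4 * ((|a x| / Real.sqrt (S x)) * (|b x| / Real.sqrt (S x))) := by
        gcongr
        exacts [hdsum.abs, hprodsum.mul_left 4, hpt _]
    _ = 16 * ∑' x, (|a x| / Real.sqrt (S x)) * (|b x| / Real.sqrt (S x)) := by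
        rw [tsum_mul_left]; ring
    _ ≤ 16 * (Real.sqrt (∑' x, a x ^ 2 / S x) * Real.sqrt (∑' x, b x ^ 2 / S x)) := by
        have := hcs
        rw [hf2val, hg2val] at this
        nlinarith [this]
    _ = 16 * ((disp θ k / 2) * (disp θ k' / 2)) := by rw [hdisp k, hdisp k']
    _ = 4 * disp θ k * disp θ k' := by ring
end
end

section
/- For every real a with 1 < a < 2, the improper integral ∫₀^∞ sin(y)·y^{−a} dy converges (the integrand is absolutely integrable near 0 and the integral converges conditionally at ∞), and ∫₀^∞ sin(y)·y^{−a} dy = cos(aπ/2)·Γ(1 − a), where Γ is the Gamma function. -/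
noncomputable section
open Real MeasureTheory
open Set Filter Topology

lemma aux_meas (a : ℝ) : Measurable (fun y : ℝ => Real.sin y * y ^ (-a)) := by
  fun_prop

lemma aux_intA (a : ℝ) (ha1 : 1 < a) (ha2 : a < 2) :
    IntegrableOn (fun y : ℝ => Real.sin y * y ^ (-a)) (Set.Ioi 0) := by
  have hm := aux_meas a
  rw [← Set.Ioc_union_Ioi_eq_Ioi (zero_le_one (α := ℝ))]
  apply IntegrableOn.union
  · have hg : IntegrableOn (fun y : ℝ => y ^ (1 - a)) (Ioc 0 1) := by
      have := intervalIntegral.intervalIntegrable_rpow' (a := 0) (b := 1)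
        (show (-1:ℝ) < 1 - a by linarith)
      rwa [intervalIntegrable_iff_integrableOn_Ioc_of_le zero_le_one] at this
    refine hg.mono' hm.aestronglyMeasurable ?_
    filter_upwards [ae_restrict_mem measurableSet_Ioc] with y hy
    have hy0 : 0 < y := hy.1
    have h1 : |Real.sin y| ≤ y := by
      calc |Real.sin y| ≤ |y| := Real.abs_sin_le_abs
      _ = y := abs_of_pos hy0
    calc ‖Real.sin y * y ^ (-a)‖ = |Real.sin y| * y ^ (-a) := by
          rw [norm_eq_abs, abs_mul, abs_of_nonneg (Real.rpow_nonneg hy0.le _)]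
      _ ≤ y * y ^ (-a) := by
          exact mul_le_mul_of_nonneg_right h1 (Real.rpow_nonneg hy0.le _)
      _ = y ^ (1 - a) := by
          rw [show (1:ℝ) - a = 1 + (-a) by ring, Real.rpow_add hy0, Real.rpow_one]
  · have hg : IntegrableOn (fun y : ℝ => y ^ (-a)) (Ioi 1) :=
      integrableOn_Ioi_rpow_of_lt (by linarith) one_pos
    refine hg.mono' hm.aestronglyMeasurable ?_
    filter_upwards [ae_restrict_mem measurableSet_Ioi] with y hy
    have hy0 : (0:ℝ) < y := lt_trans one_pos hy
    calc ‖Real.sin y * y ^ (-a)‖ = |Real.sin y| * y ^ (-a) := by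
          rw [norm_eq_abs, abs_mul, abs_of_nonneg (Real.rpow_nonneg hy0.le _)]
      _ ≤ 1 * y ^ (-a) :=
          mul_le_mul_of_nonneg_right (Real.abs_sin_le_one _) (Real.rpow_nonneg hy0.le _)
      _ = y ^ (-a) := one_mul _

lemma aux_laplace_sin {x : ℝ} (hx : 0 < x) :
    ∫ y in Ioi (0:ℝ), Real.exp (-(x*y)) * Real.sin y = 1/(x^2+1) := by
  have hc : (0:ℝ) < x^2 + 1 := by positivity
  set F : ℝ → ℝ := fun y => -(Real.exp (-(x*y)) * (x * Real.sin y + Real.cos y)) / (x^2+1)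
    with hF
  have hderiv : ∀ y ∈ Ici (0:ℝ), HasDerivAt F (Real.exp (-(x*y)) * Real.sin y) y := by
    intro y _
    have h1 : HasDerivAt (fun y : ℝ => -(x*y)) (-x) y := by
      simpa using ((hasDerivAt_id y).const_mul x).fun_neg
    have h2 := h1.exp
    have h3 : HasDerivAt (fun y => x * Real.sin y + Real.cos y)
        (x * Real.cos y + (-Real.sin y)) y :=
      ((Real.hasDerivAt_sin y).const_mul x).add (Real.hasDerivAt_cos y)
    have h4 : HasDerivAt F _ y := ((h2.mul h3).neg).div_const (x^2+1)
    convert h4 using 1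
    field_simp
    ring
  have hint : IntegrableOn (fun y => Real.exp (-(x*y)) * Real.sin y) (Ioi 0) := by
    have hme : Measurable fun y : ℝ => Real.exp (-(x*y)) * Real.sin y := by fun_prop
    refine (exp_neg_integrableOn_Ioi 0 hx).mono' hme.aestronglyMeasurable ?_
    filter_upwards [ae_restrict_mem measurableSet_Ioi] with y _
    calc ‖Real.exp (-(x*y)) * Real.sin y‖ = Real.exp (-(x*y)) * |Real.sin y| := by
          rw [norm_eq_abs, abs_mul, abs_of_pos (Real.exp_pos _)]
      _ ≤ Real.exp (-(x*y)) * 1 :=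
          mul_le_mul_of_nonneg_left (Real.abs_sin_le_one _) (Real.exp_pos _).le
      _ = Real.exp (-x*y) := by rw [mul_one, neg_mul]
  have htend : Tendsto F atTop (𝓝 0) := by
    have h1 : Tendsto (fun y : ℝ => Real.exp (-(x*y))) atTop (𝓝 0) :=
      Real.tendsto_exp_neg_atTop_nhds_zero.comp ((tendsto_const_mul_atTop_of_pos hx).2 tendsto_id)
    have h2 : Tendsto (fun y : ℝ => Real.exp (-(x*y)) * ((x+1)/(x^2+1))) atTop (𝓝 0) := by
      simpa using h1.mul_const ((x+1)/(x^2+1))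
    apply squeeze_zero_norm _ h2
    intro y
    have hb : ‖x * Real.sin y + Real.cos y‖ ≤ x + 1 := by
      calc ‖x * Real.sin y + Real.cos y‖ ≤ ‖x * Real.sin y‖ + ‖Real.cos y‖ := norm_add_le _ _
        _ ≤ x * 1 + 1 := by
            rw [norm_mul, norm_eq_abs x, abs_of_pos hx]
            gcongr
            · exact Real.abs_sin_le_one _
            · exact Real.abs_cos_le_one _
        _ = x + 1 := by ring
    have : ‖F y‖ = Real.exp (-(x*y)) * ‖x * Real.sin y + Real.cos y‖ / (x^2+1) := by
      rw [hF]
      simp only [norm_div, norm_neg, norm_mul]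
      rw [norm_eq_abs (x^2+1), abs_of_pos hc, norm_eq_abs (Real.exp _),
        abs_of_pos (Real.exp_pos _)]
    rw [this, div_eq_mul_inv, mul_assoc, div_eq_mul_inv]
    have hpos : (0:ℝ) ≤ ((x^2+1)⁻¹ : ℝ) := by positivity
    exact mul_le_mul_of_nonneg_left (mul_le_mul_of_nonneg_right hb hpos) (Real.exp_pos _).le
  have := integral_Ioi_of_hasDerivAt_of_tendsto' hderiv hint htend
  rw [this, hF]
  simp [Real.exp_zero]
  field_simp

-- ∫ exp(-(c t)) on Ioi 0 = 1/c
lemma aux_exp_int {c : ℝ} (hc : 0 < c) :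
    ∫ t in Ioi (0:ℝ), Real.exp (-(c*t)) = 1/c := by
  have := Real.integral_rpow_mul_exp_neg_mul_Ioi zero_lt_one hc
  simpa [Real.Gamma_one] using this

-- section integrability of Gamma kernel
lemma aux_sec1 (a : ℝ) (ha1 : 1 < a) {y : ℝ} (hy : 0 < y) :
    IntegrableOn (fun x : ℝ => x ^ (a-1) * Real.exp (-(y*x))) (Ioi 0) := by
  have := integrableOn_rpow_mul_exp_neg_mul_rpow (show (-1:ℝ) < a-1 by linarith) zero_lt_one hy
  refine this.congr_fun (fun x _ => ?_) measurableSet_Ioi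
  simp only [Real.rpow_one, neg_mul]

-- section integrability of Gaussian-type kernel
lemma aux_sec2 (a : ℝ) (ha1 : 1 < a) {t : ℝ} (ht : 0 < t) :
    IntegrableOn (fun x : ℝ => x ^ (a-1) * Real.exp (-(t * x ^ (2:ℝ)))) (Ioi 0) := by
  have := integrableOn_rpow_mul_exp_neg_mul_rpow (show (-1:ℝ) < a-1 by linarith) two_pos ht
  refine this.congr_fun (fun x _ => ?_) measurableSet_Ioi
  simp only [neg_mul]

-- value of Gamma kernel integral
lemma aux_val1 (a : ℝ) (ha1 : 1 < a) {y : ℝ} (hy : 0 < y) :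
    ∫ x in Ioi (0:ℝ), x ^ (a-1) * Real.exp (-(y*x)) = y ^ (-a) * Real.Gamma a := by
  rw [Real.integral_rpow_mul_exp_neg_mul_Ioi (by linarith : (0:ℝ) < a) hy]
  congr 1
  rw [one_div, ← Real.rpow_neg_one, ← Real.rpow_mul hy.le]
  norm_num

-- value of Gaussian kernel integral
lemma aux_val2 (a : ℝ) (ha1 : 1 < a) {t : ℝ} (ht : 0 < t) :
    ∫ x in Ioi (0:ℝ), x ^ (a-1) * Real.exp (-(t * x ^ (2:ℝ)))
      = t ^ (-(a/2)) * (1/2) * Real.Gamma (a/2) := by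
  have h := integral_rpow_mul_exp_neg_mul_rpow (show (0:ℝ) < 2 by norm_num)
    (show (-1:ℝ) < a-1 by linarith) ht
  simp_rw [neg_mul] at h
  rw [h, show a-1+1=a by ring, neg_div]

lemma aux_fub1 (a : ℝ) (ha1 : 1 < a) (ha2 : a < 2) :
    Real.Gamma a * (∫ y in Ioi (0:ℝ), Real.sin y * y ^ (-a))
      = ∫ x in Ioi (0:ℝ), x ^ (a-1) * (1/(x^2+1)) := by
  have hmeas : Measurable (fun p : ℝ × ℝ =>
      p.2 ^ (a-1) * Real.exp (-(p.1*p.2)) * Real.sin p.1) := by fun_prop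
  have hu1 : Integrable (fun p : ℝ × ℝ => p.2 ^ (a-1) * Real.exp (-(p.1*p.2)) * Real.sin p.1)
      ((volume.restrict (Ioi (0:ℝ))).prod (volume.restrict (Ioi (0:ℝ)))) := by
    rw [integrable_prod_iff hmeas.aestronglyMeasurable]
    constructor
    · filter_upwards [ae_restrict_mem measurableSet_Ioi] with y hy
      exact (aux_sec1 a ha1 hy).mul_const _
    · apply Integrable.congr (((aux_intA a ha1 ha2).norm).const_mul (Real.Gamma a))
      filter_upwards [ae_restrict_mem measurableSet_Ioi] with y hy
      have h1 : (∫ x in Ioi (0:ℝ), ‖x ^ (a-1) * Real.exp (-(y*x)) * Real.sin y‖)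
          = ∫ x in Ioi (0:ℝ), (x ^ (a-1) * Real.exp (-(y*x))) * |Real.sin y| := by
        refine setIntegral_congr_fun measurableSet_Ioi (fun x hx => ?_)
        simp only [norm_eq_abs, abs_mul]
        rw [abs_of_nonneg (Real.rpow_nonneg (le_of_lt hx) _), abs_of_pos (Real.exp_pos _)]
      rw [h1, integral_mul_const, aux_val1 a ha1 hy]
      rw [norm_eq_abs, abs_mul, abs_of_nonneg (Real.rpow_nonneg (le_of_lt hy) _)]
      ring
  have hswap := integral_integral_swap
    (f := fun y x => x ^ (a-1) * Real.exp (-(y*x)) * Real.sin y) hu1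
  have hL : (∫ y in Ioi (0:ℝ), ∫ x in Ioi (0:ℝ),
        x ^ (a-1) * Real.exp (-(y*x)) * Real.sin y)
      = Real.Gamma a * (∫ y in Ioi (0:ℝ), Real.sin y * y ^ (-a)) := by
    rw [← integral_const_mul]
    refine setIntegral_congr_fun measurableSet_Ioi (fun y hy => ?_)
    rw [integral_mul_const, aux_val1 a ha1 hy]
    ring
  have hR : (∫ x in Ioi (0:ℝ), ∫ y in Ioi (0:ℝ),
        x ^ (a-1) * Real.exp (-(y*x)) * Real.sin y)
      = ∫ x in Ioi (0:ℝ), x ^ (a-1) * (1/(x^2+1)) := by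
    refine setIntegral_congr_fun measurableSet_Ioi (fun x hx => ?_)
    have h2 : (∫ y in Ioi (0:ℝ), x ^ (a-1) * Real.exp (-(y*x)) * Real.sin y)
        = x ^ (a-1) * ∫ y in Ioi (0:ℝ), Real.exp (-(x*y)) * Real.sin y := by
      rw [← integral_const_mul]
      refine setIntegral_congr_fun measurableSet_Ioi (fun y _ => ?_)
      rw [mul_comm y x]
      ring
    rw [h2, aux_laplace_sin hx]
  rw [← hL, hswap, hR]

lemma aux_rpow_two (x : ℝ) : x ^ (2:ℝ) = x^2 := by
  rw [show (2:ℝ) = ((2:ℕ):ℝ) by norm_num, Real.rpow_natCast]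

lemma aux_fub2 (a : ℝ) (ha1 : 1 < a) (ha2 : a < 2) :
    (∫ x in Ioi (0:ℝ), x ^ (a-1) * (1/(x^2+1)))
      = (1/2) * Real.Gamma (a/2) * Real.Gamma (1-a/2) := by
  have ha2' : (0:ℝ) < 1 - a/2 := by linarith
  have hmeas : Measurable (fun p : ℝ × ℝ =>
      Real.exp (-p.1) * (p.2 ^ (a-1) * Real.exp (-(p.1 * p.2 ^ (2:ℝ))))) := by fun_prop
  have hu2 : Integrable (fun p : ℝ × ℝ =>
      Real.exp (-p.1) * (p.2 ^ (a-1) * Real.exp (-(p.1 * p.2 ^ (2:ℝ)))))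
      ((volume.restrict (Ioi (0:ℝ))).prod (volume.restrict (Ioi (0:ℝ)))) := by
    rw [integrable_prod_iff hmeas.aestronglyMeasurable]
    constructor
    · filter_upwards [ae_restrict_mem measurableSet_Ioi] with t ht
      exact (aux_sec2 a ha1 ht).const_mul _
    · apply Integrable.congr
        (((Real.GammaIntegral_convergent ha2').const_mul ((1/2) * Real.Gamma (a/2))))
      filter_upwards [ae_restrict_mem measurableSet_Ioi] with t ht
      have h1 : (∫ x in Ioi (0:ℝ),
            ‖Real.exp (-t) * (x ^ (a-1) * Real.exp (-(t * x ^ (2:ℝ))))‖)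
          = ∫ x in Ioi (0:ℝ), Real.exp (-t) * (x ^ (a-1) * Real.exp (-(t * x ^ (2:ℝ)))) := by
        refine setIntegral_congr_fun measurableSet_Ioi (fun x hx => ?_)
        rw [norm_eq_abs, abs_of_nonneg]
        exact mul_nonneg (Real.exp_pos _).le
          (mul_nonneg (Real.rpow_nonneg (le_of_lt hx) _) (Real.exp_pos _).le)
      rw [h1, integral_const_mul, aux_val2 a ha1 ht]
      rw [show (1:ℝ) - a/2 - 1 = -(a/2) by ring]
      ring
  have hswap := integral_integral_swap
    (f := fun t x => Real.exp (-t) * (x ^ (a-1) * Real.exp (-(t * x ^ (2:ℝ))))) hu2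
  have hL : (∫ t in Ioi (0:ℝ), ∫ x in Ioi (0:ℝ),
        Real.exp (-t) * (x ^ (a-1) * Real.exp (-(t * x ^ (2:ℝ)))))
      = (1/2) * Real.Gamma (a/2) * Real.Gamma (1-a/2) := by
    have : (∫ t in Ioi (0:ℝ), ∫ x in Ioi (0:ℝ),
          Real.exp (-t) * (x ^ (a-1) * Real.exp (-(t * x ^ (2:ℝ)))))
        = ∫ t in Ioi (0:ℝ), ((1/2) * Real.Gamma (a/2)) * (Real.exp (-t) * t ^ ((1 - a/2) - 1)) := by
      refine setIntegral_congr_fun measurableSet_Ioi (fun t ht => ?_)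
      rw [integral_const_mul, aux_val2 a ha1 ht, show (1:ℝ) - a/2 - 1 = -(a/2) by ring]
      ring
    rw [this, integral_const_mul, ← Real.Gamma_eq_integral ha2']
  have hR : (∫ x in Ioi (0:ℝ), ∫ t in Ioi (0:ℝ),
        Real.exp (-t) * (x ^ (a-1) * Real.exp (-(t * x ^ (2:ℝ)))))
      = ∫ x in Ioi (0:ℝ), x ^ (a-1) * (1/(x^2+1)) := by
    refine setIntegral_congr_fun measurableSet_Ioi (fun x hx => ?_)
    have hc : (0:ℝ) < x^2 + 1 := by positivity
    have h2 : (∫ t in Ioi (0:ℝ), Real.exp (-t) * (x ^ (a-1) * Real.exp (-(t * x ^ (2:ℝ)))))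
        = x ^ (a-1) * ∫ t in Ioi (0:ℝ), Real.exp (-((x^2+1)*t)) := by
      rw [← integral_const_mul]
      refine setIntegral_congr_fun measurableSet_Ioi (fun t _ => ?_)
      rw [aux_rpow_two x, mul_left_comm (Real.exp (-t)), ← Real.exp_add]
      ring_nf
    rw [h2, aux_exp_int hc]
  rw [← hL, hswap, hR]

lemma aux_final (a : ℝ) (ha1 : 1 < a) (ha2 : a < 2) :
    Real.Gamma a * (Real.cos (a * π / 2) * Real.Gamma (1 - a))
      = (1/2) * Real.Gamma (a/2) * Real.Gamma (1-a/2) := by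
  have hpi := Real.pi_pos
  have r1 := Real.Gamma_mul_Gamma_one_sub (a/2)
  have r2 := Real.Gamma_mul_Gamma_one_sub a
  have hs : 0 < Real.sin (π * (a/2)) :=
    Real.sin_pos_of_pos_of_lt_pi (by nlinarith) (by nlinarith)
  have hcneg : Real.cos (π * (a/2)) < 0 :=
    Real.cos_neg_of_pi_div_two_lt_of_lt (by nlinarith) (by nlinarith)
  have hsin2 : Real.sin (π * a) = 2 * Real.sin (π * (a/2)) * Real.cos (π * (a/2)) := by
    rw [show π * a = 2 * (π * (a/2)) by ring, Real.sin_two_mul]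
  have hcos : Real.cos (a * π / 2) = Real.cos (π * (a/2)) := by ring_nf
  rw [hcos]
  calc Real.Gamma a * (Real.cos (π * (a/2)) * Real.Gamma (1 - a))
      = Real.cos (π * (a/2)) * (Real.Gamma a * Real.Gamma (1 - a)) := by ring
    _ = Real.cos (π * (a/2)) * (π / (2 * Real.sin (π * (a/2)) * Real.cos (π * (a/2)))) := by
        rw [r2, hsin2]
    _ = (1/2) * (π / Real.sin (π * (a/2))) := by
        have hc : Real.cos (π * (a/2)) ≠ 0 := ne_of_lt hcneg
        rw [show (2:ℝ) * Real.sin (π*(a/2)) * Real.cos (π*(a/2))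
            = Real.cos (π*(a/2)) * (2 * Real.sin (π*(a/2))) by ring,
          div_mul_eq_div_div, ← mul_div_assoc, mul_comm (Real.cos (π*(a/2))) (π / Real.cos (π*(a/2))), div_mul_cancel₀ π hc]
        ring
    _ = (1/2) * Real.Gamma (a/2) * Real.Gamma (1-a/2) := by rw [mul_assoc, r1]

theorem stmt12 (a : ℝ) (ha1 : 1 < a) (ha2 : a < 2) :
    IntegrableOn (fun y : ℝ => Real.sin y * y ^ (-a)) (Set.Ioi 0) ∧
    (∫ y in Set.Ioi (0 : ℝ), Real.sin y * y ^ (-a)) =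
      Real.cos (a * π / 2) * Real.Gamma (1 - a) := by
  refine ⟨aux_intA a ha1 ha2, ?_⟩
  have hΓ : Real.Gamma a ≠ 0 := ne_of_gt (Real.Gamma_pos_of_pos (by linarith))
  apply mul_left_cancel₀ hΓ
  rw [aux_fub1 a ha1 ha2, aux_fub2 a ha1 ha2, aux_final a ha1 ha2]
end
end

section
/- For every real a with 1 < a < 2, the Lebesgue integral ∫_ℝ (1 − cos(y))·|y|^{−1−a} dy is finite and equals (2/a)·cos(aπ/2)·Γ(1 − a), where Γ is the Gamma function. Consequently, Γ(1 + a)·∫_ℝ (1 − cos(y))·|y|^{−1−a} dy = π·csc(aπ/2). -/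
noncomputable section
open Real MeasureTheory Set Filter Topology

lemma cos_exp_integrable {t : ℝ} (ht : 0 < t) :
    IntegrableOn (fun y => (1 - Real.cos y) * Real.exp (-(y * t))) (Ioi (0:ℝ)) := by
  refine Integrable.mono ((exp_neg_integrableOn_Ioi 0 ht).const_mul 2) ?_ ?_
  · exact (Continuous.mul (by continuity) (by continuity)).aestronglyMeasurable
  · filter_upwards [] with y
    have h1 : |1 - Real.cos y| ≤ 2 := by
      have := Real.neg_one_le_cos y
      have := Real.cos_le_one y
      rw [abs_le]; constructor <;> linarith
    have : ‖(1 - Real.cos y) * Real.exp (-(y * t))‖ ≤ 2 * Real.exp (-(y*t)) := by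
      rw [norm_mul, Real.norm_eq_abs, Real.norm_eq_abs, abs_exp]
      exact mul_le_mul_of_nonneg_right h1 (Real.exp_pos _).le
    simpa [Real.norm_eq_abs, abs_exp, mul_comm] using this

lemma inner_y {t : ℝ} (ht : 0 < t) :
    ∫ y in Ioi (0:ℝ), (1 - Real.cos y) * Real.exp (-(y * t)) = 1 / (t * (1 + t^2)) := by
  have ht2 : (0:ℝ) < 1 + t^2 := by positivity
  set G : ℝ → ℝ := fun y =>
    -(Real.exp (-(y*t))/t) + Real.exp (-(y*t))*(t*Real.cos y - Real.sin y)/(1+t^2) with hG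
  have hderiv : ∀ y ∈ Ioi (0:ℝ), HasDerivAt G ((1 - Real.cos y) * Real.exp (-(y * t))) y := by
    intro y _
    have hE : HasDerivAt (fun y => Real.exp (-(y*t))) (-t * Real.exp (-(y*t))) y := by
      have h1 : HasDerivAt (fun y : ℝ => -(y*t)) (-t) y := by
        exact ((hasDerivAt_id y).mul_const t).neg.congr_deriv (by ring)
      exact ((Real.hasDerivAt_exp (-(y*t))).comp y h1).congr_deriv (by ring : _ = -t * Real.exp (-(y*t)))
    have hc : HasDerivAt (fun y => t*Real.cos y - Real.sin y)
        (t * (-Real.sin y) - Real.cos y) y :=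
      ((Real.hasDerivAt_cos y).const_mul t).sub (Real.hasDerivAt_sin y)
    have h2 : HasDerivAt (fun y => Real.exp (-(y*t))*(t*Real.cos y - Real.sin y))
        ((-t * Real.exp (-(y*t))) * (t*Real.cos y - Real.sin y)
          + Real.exp (-(y*t)) * (t * (-Real.sin y) - Real.cos y)) y := hE.mul hc
    have h3 := ((hE.div_const t).neg).add (h2.div_const (1+t^2))
    have h4 : HasDerivAt G _ y := h3
    convert h4 using 1
    field_simp
    ring
  have hint := cos_exp_integrable ht
  have htop : Tendsto G atTop (𝓝 0) := by
    have hE0 : Tendsto (fun y : ℝ => Real.exp (-(y*t))) atTop (𝓝 0) := by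
      rw [Real.tendsto_exp_comp_nhds_zero]
      exact tendsto_neg_atBot_iff.mpr (Tendsto.atTop_mul_const ht tendsto_id)
    rw [tendsto_zero_iff_norm_tendsto_zero]
    refine squeeze_zero (fun y => norm_nonneg _)
      (g := fun y => (1/t + (t+1)/(1+t^2)) * Real.exp (-(y*t))) ?_ ?_
    · intro y
      have hb : |t*Real.cos y - Real.sin y| ≤ t + 1 := by
        calc |t*Real.cos y - Real.sin y| ≤ |t*Real.cos y| + |Real.sin y| := abs_sub _ _
        _ ≤ t * 1 + 1 := by
            gcongr
            · rw [abs_mul, abs_of_pos ht]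
              exact mul_le_mul_of_nonneg_left (Real.abs_cos_le_one y) ht.le
            · exact Real.abs_sin_le_one y
        _ = t + 1 := by ring
      calc ‖G y‖ ≤ ‖-(Real.exp (-(y*t))/t)‖ + ‖Real.exp (-(y*t))*(t*Real.cos y - Real.sin y)/(1+t^2)‖ :=
            norm_add_le _ _
      _ ≤ Real.exp (-(y*t))/t + Real.exp (-(y*t))*(t+1)/(1+t^2) := by
          rw [Real.norm_eq_abs, Real.norm_eq_abs, abs_neg, abs_div, abs_div, abs_exp,
            abs_of_pos ht, abs_of_pos ht2, abs_mul, abs_exp]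
          gcongr
      _ = (1/t + (t+1)/(1+t^2)) * Real.exp (-(y*t)) := by ring
    · simpa using hE0.const_mul (1/t + (t+1)/(1+t^2))
  have h0 : ContinuousWithinAt G (Ici 0) 0 := by
    apply Continuous.continuousWithinAt
    fun_prop
  have := integral_Ioi_of_hasDerivAt_of_tendsto h0 hderiv hint htop
  rw [this, hG]
  simp only [zero_mul, neg_zero, Real.exp_zero, Real.cos_zero, Real.sin_zero]
  field_simp
  ring

lemma beta_real {s : ℝ} (hs0 : 0 < s) (hs1 : s < 1) :
    ∫ x in (0:ℝ)..1, x ^ (s-1) * (1-x) ^ (-s) = π / Real.sin (π * s) := by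
  have h1 : Complex.betaIntegral s (1-s) = ((π : ℂ) / Complex.sin (π * s)) := by
    have hs : 0 < (s:ℂ).re := by simpa using hs0
    have ht : 0 < ((1:ℂ)-s).re := by simp [Complex.sub_re]; linarith
    have := Complex.Gamma_mul_Gamma_eq_betaIntegral hs ht
    rw [show (s:ℂ) + (1-s) = 1 by ring, Complex.Gamma_one, one_mul] at this
    rw [← this, Complex.Gamma_mul_Gamma_one_sub]
  have h2 : Complex.betaIntegral s (1-s)
      = ((∫ x in (0:ℝ)..1, x ^ (s-1) * (1-x) ^ (-s) : ℝ) : ℂ) := by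
    rw [Complex.betaIntegral, ← intervalIntegral.integral_ofReal]
    refine intervalIntegral.integral_congr fun x hx => ?_
    rw [Set.uIcc_of_le (by norm_num : (0:ℝ) ≤ 1)] at hx
    obtain ⟨hx0, hx1⟩ := hx
    rw [Complex.ofReal_mul, Complex.ofReal_cpow hx0, Complex.ofReal_cpow (by linarith : (0:ℝ) ≤ 1-x)]
    push_cast
    rw [show (1 - (s:ℂ) - 1) = -s by ring]
  have h3 := h1.symm.trans h2
  rw [show ((π:ℂ) * s) = ((π * s : ℝ) : ℂ) by push_cast; ring, ← Complex.ofReal_sin,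
    ← Complex.ofReal_div] at h3
  exact_mod_cast h3.symm

lemma mellin_one_add {s : ℝ} (hs0 : 0 < s) (hs1 : s < 1) :
    ∫ u in Ioi (0:ℝ), u ^ (s-1) / (1+u) = π / Real.sin (π * s) := by
  have himg : (fun x : ℝ => x / (1-x)) '' Ioo 0 1 = Ioi 0 := by
    ext u
    constructor
    · rintro ⟨x, ⟨hx0, hx1⟩, rfl⟩
      have : 0 < 1 - x := by linarith
      exact div_pos hx0 this
    · intro hu
      have hu' : (0:ℝ) < u := hu
      refine ⟨u / (1+u), ⟨by positivity, ?_⟩, ?_⟩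
      · rw [div_lt_one (by linarith)]; linarith
      · have h1u : (0:ℝ) < 1 + u := by linarith
        field_simp
        ring
  have hderiv : ∀ x ∈ Ioo (0:ℝ) 1, HasDerivWithinAt (fun x : ℝ => x / (1-x))
      (((1-x)^2)⁻¹) (Ioo 0 1) x := by
    intro x ⟨hx0, hx1⟩
    have hne : (1:ℝ) - x ≠ 0 := by linarith
    have := (hasDerivAt_id x).div ((hasDerivAt_const x 1).sub (hasDerivAt_id x)) hne
    refine HasDerivAt.hasDerivWithinAt (this.congr_deriv (by simp only [Pi.sub_apply, id]; field_simp; ring : _ = ((1-x)^2)⁻¹))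
  have hinj : Set.InjOn (fun x : ℝ => x / (1-x)) (Ioo 0 1) := by
    intro x ⟨hx0, hx1⟩ y ⟨hy0, hy1⟩ h
    have hx : (1:ℝ) - x ≠ 0 := by linarith
    have hy : (1:ℝ) - y ≠ 0 := by linarith
    field_simp at h
    linarith
  have key := integral_image_eq_integral_abs_deriv_smul measurableSet_Ioo hderiv hinj
    (fun u => u ^ (s-1) / (1+u))
  rw [himg] at key
  rw [key]
  have heq : ∀ x ∈ Ioo (0:ℝ) 1, |((1-x)^2)⁻¹| • ((x/(1-x)) ^ (s-1) / (1+x/(1-x)))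
      = x ^ (s-1) * (1-x) ^ (-s) := by
    intro x ⟨hx0, hx1⟩
    have hb : (0:ℝ) < 1 - x := by linarith
    have h1 : (1:ℝ) + x/(1-x) = (1-x)⁻¹ := by field_simp; ring
    rw [smul_eq_mul, h1, abs_of_pos (by positivity), Real.div_rpow hx0.le hb.le]
    have h2 : (1-x) ^ (-s) = ((1-x) ^ (s-1))⁻¹ * (1-x)⁻¹ := by
      rw [← Real.rpow_neg_one (1-x), ← Real.rpow_neg hb.le, ← Real.rpow_add hb]
      congr 1; ring
    rw [h2]
    have h3 : ((1-x) ^ (s-1)) ≠ 0 := (Real.rpow_pos_of_pos hb _).ne'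
    field_simp
  rw [setIntegral_congr_fun measurableSet_Ioo heq, ← integral_Ioc_eq_integral_Ioo,
    ← intervalIntegral.integral_of_le (by norm_num : (0:ℝ) ≤ 1)]
  exact beta_real hs0 hs1

lemma integrableK {a : ℝ} (ha1 : 1 < a) (ha2 : a < 2) :
    IntegrableOn (fun t : ℝ => t ^ (a-1) / (1+t^2)) (Ioi (0:ℝ)) := by
  have hmeas : AEStronglyMeasurable (fun t : ℝ => t ^ (a-1) / (1+t^2))
      (volume.restrict (Ioi (0:ℝ))) := by
    apply Measurable.aestronglyMeasurable
    fun_prop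
  rw [show Ioi (0:ℝ) = Ioc 0 1 ∪ Ioi 1 by rw [Ioc_union_Ioi_eq_Ioi]; norm_num]
  refine IntegrableOn.union ?_ ?_
  · have hbase : IntegrableOn (fun t : ℝ => t ^ (a-1)) (Ioc (0:ℝ) 1) := by
      have := intervalIntegral.intervalIntegrable_rpow' (a := 0) (b := 1) (r := a-1) (by linarith)
      rwa [intervalIntegrable_iff_integrableOn_Ioc_of_le (by norm_num)] at this
    refine Integrable.mono hbase (hmeas.mono_set Ioc_subset_Ioi_self) ?_
    filter_upwards [ae_restrict_mem measurableSet_Ioc] with t ⟨ht0, _⟩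
    rw [Real.norm_eq_abs, Real.norm_eq_abs,
      abs_of_pos (div_pos (Real.rpow_pos_of_pos ht0 _) (by positivity)),
      abs_of_pos (Real.rpow_pos_of_pos ht0 _)]
    exact div_le_self (Real.rpow_pos_of_pos ht0 _).le (by nlinarith)
  · have hbase : IntegrableOn (fun t : ℝ => t ^ (a-3)) (Ioi (1:ℝ)) :=
      integrableOn_Ioi_rpow_of_lt (by linarith) one_pos
    refine Integrable.mono hbase (hmeas.mono_set (Ioi_subset_Ioi (by norm_num))) ?_
    filter_upwards [ae_restrict_mem measurableSet_Ioi] with t ht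
    have ht0 : (0:ℝ) < t := by linarith [mem_Ioi.mp ht]
    rw [Real.norm_eq_abs, Real.norm_eq_abs,
      abs_of_pos (div_pos (Real.rpow_pos_of_pos ht0 _) (by positivity)),
      abs_of_pos (Real.rpow_pos_of_pos ht0 _)]
    rw [div_le_iff₀ (by positivity)]
    have heq : t ^ (a-1) = t ^ (a-3) * t^2 := by
      rw [show a - 1 = (a-3) + 2 by ring, Real.rpow_add ht0,
        show (2:ℝ) = ((2:ℕ):ℝ) by norm_num, Real.rpow_natCast]
    rw [heq]
    have h1 : (1:ℝ) ≤ t := le_of_lt (mem_Ioi.mp ht)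
    nlinarith [Real.rpow_pos_of_pos ht0 (a-3)]

lemma integralK {a : ℝ} (ha1 : 1 < a) (ha2 : a < 2) :
    ∫ t in Ioi (0:ℝ), t ^ (a-1) / (1+t^2) = π / (2 * Real.sin (π * a / 2)) := by
  have h2 := integral_comp_rpow_Ioi (fun u => u ^ (a/2-1) / (1+u)) (p := 2) two_ne_zero
  have heq : ∀ x ∈ Ioi (0:ℝ), (|(2:ℝ)| * x ^ ((2:ℝ)-1)) • ((x^(2:ℝ)) ^ (a/2-1) / (1+x^(2:ℝ)))
      = 2 * (x ^ (a-1) / (1+x^2)) := by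
    intro x hx
    have hx0 : (0:ℝ) < x := hx
    rw [smul_eq_mul, ← Real.rpow_natCast x 2, ← Real.rpow_mul hx0.le]
    rw [show ((2:ℝ)-1) = 1 by norm_num, Real.rpow_one]
    rw [show (2:ℝ) * (a/2-1) = a - 2 by ring]
    rw [show |(2:ℝ)| = 2 by norm_num]
    rw [show (((2:ℕ)):ℝ) = (2:ℝ) by norm_num]
    have hxx : x * x ^ (a-2) = x ^ (a-1) := by
      nth_rewrite 1 [← Real.rpow_one x]
      rw [← Real.rpow_add hx0]
      congr 1; ring
    field_simp
    rw [hxx]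
  rw [setIntegral_congr_fun measurableSet_Ioi heq] at h2
  rw [integral_const_mul, mellin_one_add (by linarith) (by linarith)] at h2
  have hs : Real.sin (π * (a/2)) ≠ 0 := by
    refine (Real.sin_pos_of_pos_of_lt_pi ?_ ?_).ne'
    · positivity
    · nlinarith [Real.pi_pos]
  rw [show π * a / 2 = π * (a/2) by ring]
  have hI : (∫ t in Ioi (0:ℝ), t ^ (a-1) / (1+t^2)) = π / Real.sin (π*(a/2)) / 2 := by
    linarith
  rw [hI, div_div, mul_comm]

lemma fubini_main {a : ℝ} (ha1 : 1 < a) (ha2 : a < 2) :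
    IntegrableOn (fun y : ℝ => (1 - Real.cos y) * y ^ (-1-a)) (Ioi (0:ℝ)) ∧
    (∫ y in Ioi (0:ℝ), (1 - Real.cos y) * y ^ (-1-a))
      = π / (2 * Real.sin (π * a / 2) * Real.Gamma (1+a)) := by
  set μ := volume.restrict (Ioi (0:ℝ)) with hμ
  set F : ℝ × ℝ → ℝ := fun p => (1 - Real.cos p.2) * p.1 ^ a * Real.exp (-(p.2 * p.1)) with hF
  have hGpos : 0 < Real.Gamma (1+a) := Real.Gamma_pos_of_pos (by linarith)
  have hFmeas : AEStronglyMeasurable F (μ.prod μ) := by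
    apply Measurable.aestronglyMeasurable
    fun_prop
  -- fiberwise integrability in y for fixed t > 0
  have hfiber : ∀ t ∈ Ioi (0:ℝ), Integrable (fun y => F (t, y)) μ := by
    intro t ht
    have := (cos_exp_integrable ht).const_mul (t ^ a)
    refine this.congr (Eventually.of_forall fun y => ?_)
    simp only [hF]
    ring
  -- value of the inner integral in y
  have hval : ∀ t ∈ Ioi (0:ℝ), (∫ y, F (t, y) ∂μ) = t ^ (a-1) / (1 + t^2) := by
    intro t ht
    have ht0 : (0:ℝ) < t := ht
    have h1 : (∫ y, F (t, y) ∂μ) = t ^ a * ∫ y in Ioi (0:ℝ), (1 - Real.cos y) * Real.exp (-(y * t)) := by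
      rw [hμ, ← integral_const_mul]
      refine setIntegral_congr_fun measurableSet_Ioi fun y _ => ?_
      simp only [hF]; ring
    rw [h1, inner_y ht0]
    have hsplit : t ^ a = t * t ^ (a-1) := by
      nth_rewrite 2 [← Real.rpow_one t]
      rw [← Real.rpow_add ht0]
      congr 1; ring
    rw [hsplit]
    field_simp
  -- norms
  have hnorm : ∀ t ∈ Ioi (0:ℝ), (∫ y, ‖F (t, y)‖ ∂μ) = t ^ (a-1) / (1 + t^2) := by
    intro t ht
    have ht0 : (0:ℝ) < t := ht
    rw [← hval t ht]
    refine integral_congr_ae (Eventually.of_forall fun y => ?_)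
    refine norm_of_nonneg ?_
    have h1 : 0 ≤ 1 - Real.cos y := by linarith [Real.cos_le_one y]
    have h2 : (0:ℝ) < t ^ a := Real.rpow_pos_of_pos ht0 a
    positivity
  -- product integrability
  have hprod : Integrable F (μ.prod μ) := by
    rw [integrable_prod_iff hFmeas]
    constructor
    · filter_upwards [ae_restrict_mem measurableSet_Ioi] with t ht
      exact hfiber t ht
    · refine (integrableK ha1 ha2).congr ?_
      filter_upwards [ae_restrict_mem measurableSet_Ioi] with t ht
      exact (hnorm t ht).symm
  -- the swapped iterated integrals
  have hswap : (∫ t, ∫ y, F (t, y) ∂μ ∂μ) = ∫ y, ∫ t, F (t, y) ∂μ ∂μ :=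
    integral_integral_swap hprod
  -- LHS value
  have hLHS : (∫ t, ∫ y, F (t, y) ∂μ ∂μ) = π / (2 * Real.sin (π * a / 2)) := by
    rw [hμ]
    rw [setIntegral_congr_fun measurableSet_Ioi hval]
    rw [integralK ha1 ha2]
  -- inner t-integral
  have hinner_t : ∀ y ∈ Ioi (0:ℝ), (∫ t, F (t, y) ∂μ)
      = Real.Gamma (1+a) * ((1 - Real.cos y) * y ^ (-1-a)) := by
    intro y hy
    have hy0 : (0:ℝ) < y := hy
    have h1 : (∫ t, F (t, y) ∂μ)
        = (1 - Real.cos y) * ∫ t in Ioi (0:ℝ), t ^ ((1+a)-1) * Real.exp (-(y * t)) := by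
      rw [hμ, ← integral_const_mul]
      refine setIntegral_congr_fun measurableSet_Ioi fun t _ => ?_
      simp only [hF]
      rw [show (1:ℝ)+a-1 = a by ring]
      ring
    rw [h1, Real.integral_rpow_mul_exp_neg_mul_Ioi (by linarith) hy0]
    have h2 : (1/y) ^ (1+a) = y ^ (-1-a) := by
      rw [one_div, ← Real.rpow_neg_one y, ← Real.rpow_mul hy0.le]
      congr 1; ring
    rw [h2]
    ring
  have hsin : 0 < Real.sin (π * a / 2) := by
    apply Real.sin_pos_of_pos_of_lt_pi
    · positivity
    · nlinarith [Real.pi_pos]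
  -- integrability of the marginal
  have hRHSint : Integrable (fun y => ∫ t, F (t, y) ∂μ) μ := hprod.integral_prod_right
  have h3 : Integrable (fun y => Real.Gamma (1+a) * ((1 - Real.cos y) * y ^ (-1-a))) μ := by
    refine hRHSint.congr ?_
    filter_upwards [ae_restrict_mem measurableSet_Ioi] with y hy
    exact hinner_t y hy
  have hgint : IntegrableOn (fun y : ℝ => (1 - Real.cos y) * y ^ (-1-a)) (Ioi (0:ℝ)) := by
    refine (h3.const_mul ((Real.Gamma (1+a))⁻¹)).congr (Eventually.of_forall fun y => ?_)
    field_simp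
  have hRHS : (∫ y, ∫ t, F (t, y) ∂μ ∂μ)
      = Real.Gamma (1+a) * ∫ y in Ioi (0:ℝ), (1 - Real.cos y) * y ^ (-1-a) := by
    rw [hμ]
    rw [setIntegral_congr_fun measurableSet_Ioi hinner_t, integral_const_mul]
  refine ⟨hgint, ?_⟩
  have hfin := hLHS.symm.trans (hswap.trans hRHS)
  rw [eq_div_iff (by positivity)]
  calc (∫ y in Ioi (0:ℝ), (1 - Real.cos y) * y ^ (-1-a)) * (2 * Real.sin (π * a / 2) * Real.Gamma (1+a))
      = (Real.Gamma (1+a) * ∫ y in Ioi (0:ℝ), (1 - Real.cos y) * y ^ (-1-a)) * (2 * Real.sin (π * a / 2)) := by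
        ring
  _ = π := by rw [← hfin]; field_simp

lemma integrable_comp_abs' {f : ℝ → ℝ} (hf : IntegrableOn (fun x => f |x|) (Ioi 0)) :
    Integrable (fun x => f |x|) := by
  have int_Iic : IntegrableOn (fun x ↦ f |x|) (Iic 0) := by
    rw [← Measure.map_neg_eq_self (volume : Measure ℝ)]
    have m : MeasurableEmbedding fun x : ℝ => -x := (Homeomorph.neg ℝ).measurableEmbedding
    rw [m.integrableOn_map_iff]
    simp_rw [Function.comp_def, abs_neg, neg_preimage, neg_Iic, neg_zero]
    exact Iff.mpr integrableOn_Ici_iff_integrableOn_Ioi hf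
  rw [← integrableOn_univ, ← Iic_union_Ioi (a := (0:ℝ))]
  exact int_Iic.union hf

theorem stmt13 (a : ℝ) (ha1 : 1 < a) (ha2 : a < 2) :
    Integrable (fun y : ℝ => (1 - Real.cos y) * |y| ^ (-1 - a)) ∧
    (∫ y : ℝ, (1 - Real.cos y) * |y| ^ (-1 - a)) =
      (2 / a) * Real.cos (a * π / 2) * Real.Gamma (1 - a) ∧
    Real.Gamma (1 + a) * (∫ y : ℝ, (1 - Real.cos y) * |y| ^ (-1 - a)) =
      π * (1 / Real.sin (a * π / 2)) := by
  obtain ⟨hint0, hval0⟩ := fubini_main ha1 ha2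
  set f : ℝ → ℝ := fun u => (1 - Real.cos u) * u ^ (-1-a) with hf
  have hgf : (fun y : ℝ => (1 - Real.cos y) * |y| ^ (-1 - a)) = fun y => f |y| := by
    funext y; simp only [hf, Real.cos_abs]
  have hfIoi : IntegrableOn (fun x : ℝ => f |x|) (Ioi 0) := by
    refine hint0.congr ?_
    filter_upwards [ae_restrict_mem measurableSet_Ioi] with x hx
    rw [abs_of_pos (mem_Ioi.mp hx)]
  have hint : Integrable (fun y : ℝ => (1 - Real.cos y) * |y| ^ (-1 - a)) := by
    rw [hgf]; exact integrable_comp_abs' hfIoi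
  have hsin : 0 < Real.sin (π * a / 2) := by
    apply Real.sin_pos_of_pos_of_lt_pi
    · positivity
    · nlinarith [Real.pi_pos]
  have hGa : 0 < Real.Gamma a := Real.Gamma_pos_of_pos (by linarith)
  have hG1 : 0 < Real.Gamma (1+a) := Real.Gamma_pos_of_pos (by linarith)
  have hI : (∫ y : ℝ, (1 - Real.cos y) * |y| ^ (-1 - a))
      = π / (Real.sin (π * a / 2) * Real.Gamma (1+a)) := by
    rw [hgf, integral_comp_abs, hval0]
    field_simp
  have hrec : Real.Gamma (1+a) = a * Real.Gamma a := by
    rw [add_comm]; exact Real.Gamma_add_one (by linarith)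
  have hrefl : Real.Gamma a * Real.Gamma (1-a) = π / Real.sin (π * a) :=
    Real.Gamma_mul_Gamma_one_sub a
  have hcos : Real.cos (π * a / 2) < 0 := by
    apply Real.cos_neg_of_pi_div_two_lt_of_lt
    · nlinarith [Real.pi_pos]
    · nlinarith [Real.pi_pos]
  have hdouble : Real.sin (π * a) = 2 * Real.sin (π*a/2) * Real.cos (π*a/2) := by
    have h := Real.sin_two_mul (π*a/2)
    rw [show 2*(π*a/2) = π*a by ring] at h
    linarith
  have hsinpa : Real.sin (π*a) ≠ 0 := by
    rw [hdouble]
    exact (mul_neg_of_pos_of_neg (by positivity) hcos).ne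
  have hrefl' : Real.Gamma a * Real.Gamma (1-a) * Real.sin (π*a) = π := by
    rw [hrefl]; field_simp
  have hG1s : Real.Gamma (1-a) = π / (Real.sin (π*a) * Real.Gamma a) := by
    rw [eq_div_iff (mul_ne_zero hsinpa hGa.ne')]
    linear_combination hrefl'
  refine ⟨hint, ?_, ?_⟩
  · rw [hI, hrec, hG1s, hdouble, show a * π / 2 = π * a / 2 by ring]
    have ha0 : a ≠ 0 := by linarith
    rw [div_eq_iff (by positivity : Real.sin (π*a/2) * (a * Real.Gamma a) ≠ 0)]
    field_simp [hcos.ne]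
  · rw [hI, show a * π / 2 = π * a / 2 by ring]
    field_simp
end
end
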